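/- arXiv:0809.3626 — 4 statements merged into one kernel-verified Lean document; each statement's English description precedes it below -/
import Mathlib

section
/- Let X be a closed subspace of a Banach space Z with a shrinking FDD (E_i) with projection constant C, and for m in N let Z_m be the closed span of (E_i : i > m). Let eta > 0 satisfy (1+C)eta < 1, and let (z_i) be a sequence in the unit sphere S_X with dist(z_i, Z_i) < eta for all i. Then there exist a subsequence (x_i) of (z_i) and a weakly null sequence (y_i) in S_X such that ||x_i - y_i|| < 2(1+C)eta for all i. -/
open Filter Topology Set

noncomputable section

/-- A bundled (real) Banach space. -/
structure BanachSp : Type 1 where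
  carrier : Type
  [nacg : NormedAddCommGroup carrier]
  [nsp : NormedSpace ℝ carrier]
  [complete : CompleteSpace carrier]

attribute [instance] BanachSp.nacg BanachSp.nsp BanachSp.complete

instance : CoeSort BanachSp Type := ⟨BanachSp.carrier⟩

section Seqs

variable {V : Type*} [NormedAddCommGroup V] [NormedSpace ℝ V]
variable {W : Type*} [NormedAddCommGroup W] [NormedSpace ℝ W]
variable {X : Type*} [NormedAddCommGroup X] [NormedSpace ℝ X]

/-- `DomBy u x C` : the sequence `(u i)` `C`-dominates the sequence `(x i)`, i.e.
`‖∑ a i • x i‖ ≤ C * ‖∑ a i • u i‖` for all finitely supported scalars. -/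
def DomBy (u : ℕ → V) (x : ℕ → X) (C : ℝ) : Prop :=
  ∀ (a : ℕ → ℝ) (n : ℕ),
    ‖∑ i ∈ Finset.range n, a i • x i‖ ≤ C * ‖∑ i ∈ Finset.range n, a i • u i‖

def IsNormalized (v : ℕ → V) : Prop := ∀ i, ‖v i‖ = 1

/-- A basic sequence: nonzero vectors with uniformly bounded partial sum projections. -/
def IsBasicSeq (v : ℕ → V) : Prop :=
  (∀ i, v i ≠ 0) ∧ ∃ K : ℝ, 1 ≤ K ∧ ∀ (a : ℕ → ℝ) (m n : ℕ), m ≤ n →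
    ‖∑ i ∈ Finset.range m, a i • v i‖ ≤ K * ‖∑ i ∈ Finset.range n, a i • v i‖

/-- `1`-unconditionality : changing signs of coefficients does not change the norm. -/
def IsOneUnconditional (v : ℕ → V) : Prop :=
  ∀ (a ε : ℕ → ℝ), (∀ i, ε i = 1 ∨ ε i = -1) → ∀ n : ℕ,
    ‖∑ i ∈ Finset.range n, (ε i * a i) • v i‖ = ‖∑ i ∈ Finset.range n, a i • v i‖

/-- Bimonotonicity of a basic sequence: interval projections have norm at most one. -/
def IsBimonotoneSeq (v : ℕ → V) : Prop :=
  ∀ (a : ℕ → ℝ) (p q n : ℕ), q ≤ n →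
    ‖∑ i ∈ Finset.Ico p q, a i • v i‖ ≤ ‖∑ i ∈ Finset.range n, a i • v i‖

/-- `(v i)` is `D`-right-dominant : if `m i ≤ n i` for all `i` then `(v (m i))` is
`D`-dominated by `(v (n i))`. -/
def RightDominantC (v : ℕ → V) (D : ℝ) : Prop :=
  ∀ m n : ℕ → ℕ, StrictMono m → StrictMono n → (∀ i, m i ≤ n i) →
    DomBy (fun i => v (n i)) (fun i => v (m i)) D

def RightDominant (v : ℕ → V) : Prop := ∃ D : ℝ, 1 ≤ D ∧ RightDominantC v D

/-- `(v i)` is `D`-left-dominant : if `m i ≤ n i` for all `i` then `(v (m i))`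
`D`-dominates `(v (n i))`. -/
def LeftDominantC (v : ℕ → V) (D : ℝ) : Prop :=
  ∀ m n : ℕ → ℕ, StrictMono m → StrictMono n → (∀ i, m i ≤ n i) →
    DomBy (fun i => v (m i)) (fun i => v (n i)) D

/-- `C`-block-stability: any two normalized block bases whose blocks run along the same
successive intervals are `C`-equivalent. -/
def BlockStableC (v : ℕ → V) (C : ℝ) : Prop :=
  ∀ (x y : ℕ → V) (k : ℕ → ℕ), StrictMono k →
    (∀ i, x i ∈ Submodule.span ℝ (v '' Set.Ico (k i) (k (i+1)))) →
    (∀ i, y i ∈ Submodule.span ℝ (v '' Set.Ico (k i) (k (i+1)))) →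
    (∀ i, ‖x i‖ = 1) → (∀ i, ‖y i‖ = 1) → DomBy x y C

def BlockStable (v : ℕ → V) : Prop := ∃ C : ℝ, 1 ≤ C ∧ BlockStableC v C

/-- A basic sequence is shrinking if every functional is small on far tails of its span. -/
def ShrinkingSeq (v : ℕ → V) : Prop :=
  ∀ φ : V →L[ℝ] ℝ, ∀ δ : ℝ, 0 < δ → ∃ m : ℕ, ∀ (a : ℕ → ℝ) (n : ℕ),
    ‖∑ i ∈ Finset.Ico m n, a i • v i‖ ≤ 1 →
    |φ (∑ i ∈ Finset.Ico m n, a i • v i)| ≤ δ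

/-- A basic sequence is boundedly complete if series with bounded partial sums converge. -/
def BoundedlyCompleteSeq (v : ℕ → V) : Prop :=
  ∀ a : ℕ → ℝ, (∃ M : ℝ, ∀ n, ‖∑ i ∈ Finset.range n, a i • v i‖ ≤ M) →
    ∃ s : V, Tendsto (fun n => ∑ i ∈ Finset.range n, a i • v i) atTop (𝓝 s)

/-- `(w i)` represents (isometrically) the sequence of biorthogonal functionals of the
`1`-unconditional basic sequence `(v i)`: the norm of `∑ a i • w i` is the supremum of the
pairings `∑ a i * b i` over `b` with `‖∑ b i • v i‖ ≤ 1`. -/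
def IsBiorthDual (v : ℕ → V) (w : ℕ → W) : Prop :=
  ∀ (a : ℕ → ℝ) (n : ℕ),
    IsLUB {r : ℝ | ∃ b : ℕ → ℝ, ‖∑ i ∈ Finset.range n, b i • v i‖ ≤ 1 ∧
      r = ∑ i ∈ Finset.range n, a i * b i} ‖∑ i ∈ Finset.range n, a i • w i‖

def WeaklyNullSeq (x : ℕ → X) : Prop :=
  ∀ φ : X →L[ℝ] ℝ, Tendsto (fun i => φ (x i)) atTop (𝓝 0)

end Seqs

/-- A finite-dimensional decomposition (FDD) of `Z` : finite-dimensional subspaces `E i`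
together with the coordinate projections `P i`, such that every `z` is the sum of its
coordinates, uniquely. -/
structure FDD (Z : Type*) [NormedAddCommGroup Z] [NormedSpace ℝ Z] where
  E : ℕ → Submodule ℝ Z
  finDim : ∀ n, FiniteDimensional ℝ (E n)
  P : ℕ → Z →L[ℝ] Z
  mem_E : ∀ i z, P i z ∈ E i
  sum_eq : ∀ z : Z, Tendsto (fun n => ∑ i ∈ Finset.range n, P i z) atTop (𝓝 z)
  unique : ∀ (z : Z) (f : ℕ → Z), (∀ i, f i ∈ E i) →
    Tendsto (fun n => ∑ i ∈ Finset.range n, f i) atTop (𝓝 z) → ∀ i, f i = P i z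

namespace FDD

variable {Z : Type*} [NormedAddCommGroup Z] [NormedSpace ℝ Z]
variable {V : Type*} [NormedAddCommGroup V] [NormedSpace ℝ V]
variable {W : Type*} [NormedAddCommGroup W] [NormedSpace ℝ W]

/-- The canonical projection `P^E_s` onto the span of `(E i : i ∈ s)`. -/
def proj (F : FDD Z) (s : Finset ℕ) : Z →L[ℝ] Z := ∑ i ∈ s, F.P i

/-- The support of a vector with respect to the FDD. -/
def supp (F : FDD Z) (z : Z) : Set ℕ := {i | F.P i z ≠ 0}

/-- `min supp_E z`. -/
def minSupp (F : FDD Z) (z : Z) : ℕ := sInf (F.supp z)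

/-- A block sequence with respect to an FDD: supports lie in successive intervals. -/
def IsBlockSeq (F : FDD Z) (z : ℕ → Z) : Prop :=
  ∃ k : ℕ → ℕ, StrictMono k ∧ ∀ i, F.supp (z i) ⊆ Set.Ico (k i) (k (i+1))

/-- Bimonotonicity: all interval projections have norm at most `1`. -/
def Bimonotone (F : FDD Z) : Prop :=
  ∀ (m n : ℕ) (z : Z), ‖F.proj (Finset.Icc m n) z‖ ≤ ‖z‖

/-- `C` is the projection constant: the supremum of norms of interval projections. -/
def IsProjConst (F : FDD Z) (C : ℝ) : Prop :=
  IsLUB {r : ℝ | ∃ (m n : ℕ) (z : Z), ‖z‖ ≤ 1 ∧ r = ‖F.proj (Finset.Icc m n) z‖} C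

/-- The FDD is shrinking: every functional is the norm limit of its finite-dimensional
restrictions, i.e. the biorthogonal functionals form an FDD of the dual. -/
def Shrinking (F : FDD Z) : Prop :=
  ∀ φ : Z →L[ℝ] ℝ,
    Tendsto (fun n => ‖φ - φ.comp (F.proj (Finset.range n))‖) atTop (𝓝 0)

/-- The FDD is boundedly complete. -/
def BoundedlyComplete (F : FDD Z) : Prop :=
  ∀ f : ℕ → Z, (∀ i, f i ∈ F.E i) →
    (∃ M : ℝ, ∀ n, ‖∑ i ∈ Finset.range n, f i‖ ≤ M) →
    ∃ z : Z, Tendsto (fun n => ∑ i ∈ Finset.range n, f i) atTop (𝓝 z)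

/-- `H` is a blocking of `F`. -/
def IsBlockingOf (H F : FDD Z) : Prop :=
  ∃ m : ℕ → ℕ, m 0 = 0 ∧ StrictMono m ∧
    ∀ j, H.E j = ⨆ i ∈ Finset.Ico (m j) (m (j+1)), F.E i

/-- The closed span `Z_m` of the subspaces `E i`, `i ≥ m` (the first `m` coordinates
removed). -/
def tail (F : FDD Z) (m : ℕ) : Set Z :=
  closure (↑(⨆ i ∈ Set.Ici m, F.E i) : Set Z)

/-- Subsequential `C`-`V`-upper block estimates. -/
def UpperBlockC (F : FDD Z) (v : ℕ → V) (C : ℝ) : Prop :=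
  ∀ z : ℕ → Z, F.IsBlockSeq z → (∀ i, ‖z i‖ = 1) →
    DomBy (fun i => v (F.minSupp (z i))) z C

def UpperBlock (F : FDD Z) (v : ℕ → V) : Prop := ∃ C : ℝ, 1 ≤ C ∧ F.UpperBlockC v C

/-- Subsequential `C`-`V`-lower block estimates. -/
def LowerBlockC (F : FDD Z) (v : ℕ → V) (C : ℝ) : Prop :=
  ∀ z : ℕ → Z, F.IsBlockSeq z → (∀ i, ‖z i‖ = 1) →
    DomBy z (fun i => v (F.minSupp (z i))) C

def LowerBlock (F : FDD Z) (v : ℕ → V) : Prop := ∃ C : ℝ, 1 ≤ C ∧ F.LowerBlockC v C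

/-- A functional supported (w.r.t. the biorthogonal FDD `(E i ^*)`) on the finite set `s`. -/
def dualSupported (F : FDD Z) (s : Finset ℕ) (φ : Z →L[ℝ] ℝ) : Prop :=
  ∀ z : Z, φ z = φ (F.proj s z)

/-- A block sequence of the biorthogonal functionals `(E i ^*)`. -/
def IsDualBlockSeq (F : FDD Z) (φ : ℕ → Z →L[ℝ] ℝ) : Prop :=
  ∃ k : ℕ → ℕ, StrictMono k ∧
    ∀ i, F.dualSupported (Finset.Ico (k i) (k (i+1))) (φ i)

/-- `min supp` of a functional w.r.t. `(E i ^*)`. -/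
def dualMinSupp (F : FDD Z) (φ : Z →L[ℝ] ℝ) : ℕ :=
  sInf {j | ∃ z, φ (F.P j z) ≠ 0}

/-- The biorthogonal FDD `(E i ^*)` satisfies subsequential `C`-`V^*`-lower block
estimates in `Z^(*)`. -/
def DualLowerBlockC (F : FDD Z) (w : ℕ → W) (C : ℝ) : Prop :=
  ∀ φ : ℕ → Z →L[ℝ] ℝ, F.IsDualBlockSeq φ → (∀ i, ‖φ i‖ = 1) →
    DomBy φ (fun i => w (F.dualMinSupp (φ i))) C

def DualLowerBlock (F : FDD Z) (w : ℕ → W) : Prop := ∃ C : ℝ, 1 ≤ C ∧ F.DualLowerBlockC w C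

/-- The biorthogonal FDD `(E i ^*)` satisfies subsequential `C`-`V`-upper block
estimates. -/
def DualUpperBlockC (F : FDD Z) (w : ℕ → W) (C : ℝ) : Prop :=
  ∀ φ : ℕ → Z →L[ℝ] ℝ, F.IsDualBlockSeq φ → (∀ i, ‖φ i‖ = 1) →
    DomBy (fun i => w (F.dualMinSupp (φ i))) φ C

/-- A `δ̄`-skipped block sequence w.r.t. the FDD. -/
def IsSkippedBlock (F : FDD Z) (δ : ℕ → ℝ) (y : ℕ → Z) : Prop :=
  (∀ i, ‖y i‖ = 1) ∧ ∃ k : ℕ → ℕ, k 0 = 0 ∧ StrictMono k ∧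
    ∀ i, ‖F.proj (Finset.Ioo (k i) (k (i+1))) (y i) - y i‖ < δ i

end FDD

section Trees

variable {V : Type*} [NormedAddCommGroup V] [NormedSpace ℝ V]
variable {W : Type*} [NormedAddCommGroup W] [NormedSpace ℝ W]

/-- The finite set `{n 0, …, n (2l+1)}`, i.e. the branch node of level `l+1` along the
strictly increasing sequence `n`. -/
def branchSet (n : ℕ → ℕ) (l : ℕ) : Finset ℕ := Finset.image n (Finset.range (2*l+2))

/-- A normalized weakly null even tree in `X` (indexed by finite sets of naturals, which
correspond to finite strictly increasing sequences). -/
def WNEvenTree {X : Type*} [NormedAddCommGroup X] [NormedSpace ℝ X]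
    (x : Finset ℕ → X) : Prop :=
  (∀ s : Finset ℕ, Even s.card → ‖x s‖ = 1) ∧
  ∀ s : Finset ℕ, Odd s.card →
    ∀ φ : X →L[ℝ] ℝ, Tendsto (fun k => φ (x (insert k s))) atTop (𝓝 0)

/-- Subsequential `C`-`V`-upper tree estimates. -/
def UpperTreeC (v : ℕ → V) (X : Type*) [NormedAddCommGroup X] [NormedSpace ℝ X]
    (C : ℝ) : Prop :=
  ∀ x : Finset ℕ → X, WNEvenTree x →
    ∃ n : ℕ → ℕ, StrictMono n ∧
      DomBy (fun l => v (n (2*l))) (fun l => x (branchSet n l)) C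

/-- Subsequential `V`-upper tree estimates. -/
def UpperTree (v : ℕ → V) (X : Type*) [NormedAddCommGroup X] [NormedSpace ℝ X] : Prop :=
  ∃ C : ℝ, 1 ≤ C ∧ UpperTreeC v X C

/-- A normalized `w^*`-null even tree in the dual of `X`. -/
def WStarNullEvenTree {X : Type*} [NormedAddCommGroup X] [NormedSpace ℝ X]
    (f : Finset ℕ → (X →L[ℝ] ℝ)) : Prop :=
  (∀ s : Finset ℕ, Even s.card → ‖f s‖ = 1) ∧
  ∀ s : Finset ℕ, Odd s.card →
    ∀ u : X, Tendsto (fun k => f (insert k s) u) atTop (𝓝 0)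

/-- Subsequential `C`-`V^*`-lower `w^*` tree estimates for the dual of `X`. -/
def LowerWStarTreeC (w : ℕ → W) (X : Type*) [NormedAddCommGroup X] [NormedSpace ℝ X]
    (C : ℝ) : Prop :=
  ∀ f : Finset ℕ → (X →L[ℝ] ℝ), WStarNullEvenTree f →
    ∃ n : ℕ → ℕ, StrictMono n ∧
      DomBy (fun l => f (branchSet n l)) (fun l => w (n (2*l))) C

end Trees

section Maps

variable {X : Type*} [NormedAddCommGroup X] [NormedSpace ℝ X]
variable {Y : Type*} [NormedAddCommGroup Y] [NormedSpace ℝ Y]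

/-- `X` embeds isomorphically into `Y`. -/
def Embeds (X Y : Type*) [NormedAddCommGroup X] [NormedSpace ℝ X]
    [NormedAddCommGroup Y] [NormedSpace ℝ Y] : Prop :=
  ∃ T : X →L[ℝ] Y, ∃ c : ℝ, 0 < c ∧ ∀ x : X, c * ‖x‖ ≤ ‖T x‖

/-- `X` is a quotient of `Z` (there is a bounded linear surjection `Z → X`). -/
def IsQuotientOf (X Z : Type*) [NormedAddCommGroup X] [NormedSpace ℝ X]
    [NormedAddCommGroup Z] [NormedSpace ℝ Z] : Prop :=
  ∃ Q : Z →L[ℝ] X, Function.Surjective Q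

/-- A map between dual spaces is `w^*`-`w^*` continuous. -/
def WStarWStarContinuous {X Z : Type*} [NormedAddCommGroup X] [NormedSpace ℝ X]
    [NormedAddCommGroup Z] [NormedSpace ℝ Z]
    (T : StrongDual ℝ X →L[ℝ] StrongDual ℝ Z) : Prop :=
  Continuous (fun φ : WeakDual ℝ X =>
    StrongDual.toWeakDual (T (WeakDual.toStrongDual φ)))

end Maps
section AuxLemmas
variable {Z : Type*} [NormedAddCommGroup Z] [NormedSpace ℝ Z]

lemma FDD.P_eq_zero_of_ne (F : FDD Z) {i j : ℕ} (h : j ≠ i) {x : Z} (hx : x ∈ F.E i) :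
    F.P j x = 0 := by
  have hf : ∀ k, (if k = i then x else 0) ∈ F.E k := by
    intro k
    by_cases hk : k = i
    · subst hk; simpa using hx
    · simp [hk]
  have hsum : Tendsto (fun n => ∑ k ∈ Finset.range n, (if k = i then x else 0)) atTop (𝓝 x) := by
    apply tendsto_atTop_of_eventually_const (i₀ := i + 1)
    intro n hn
    rw [Finset.sum_ite_eq' (Finset.range n) i (fun _ => x)]
    simp [Finset.mem_range.mpr (Nat.lt_of_lt_of_le (Nat.lt_succ_self i) hn)]
  have hu := F.unique x _ hf hsum j
  simp only [if_neg h] at hu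
  exact hu.symm

lemma FDD.P_tail_eq_zero (F : FDD Z) {j m : ℕ} (hj : j < m) {x : Z}
    (hx : x ∈ F.tail m) : F.P j x = 0 := by
  have hker : (⨆ i ∈ Set.Ici m, F.E i) ≤ LinearMap.ker (F.P j : Z →ₗ[ℝ] Z) := by
    refine iSup₂_le fun i hi => ?_
    intro y hy
    have : j ≠ i := Nat.ne_of_lt (lt_of_lt_of_le hj hi)
    exact LinearMap.mem_ker.mpr (F.P_eq_zero_of_ne this hy)
  have hcl : IsClosed (LinearMap.ker (F.P j : Z →ₗ[ℝ] Z) : Set Z) := ContinuousLinearMap.isClosed_ker (F.P j)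
  have : x ∈ (LinearMap.ker (F.P j : Z →ₗ[ℝ] Z) : Set Z) := by
    have := closure_mono (show ((⨆ i ∈ Set.Ici m, F.E i : Submodule ℝ Z) : Set Z)
        ⊆ (LinearMap.ker (F.P j : Z →ₗ[ℝ] Z) : Set Z) from hker) hx
    rwa [hcl.closure_eq] at this
  exact this

lemma FDD.proj_range_tail_eq_zero (F : FDD Z) {n m : ℕ} (hnm : n ≤ m) {x : Z}
    (hx : x ∈ F.tail m) : F.proj (Finset.range n) x = 0 := by
  rw [FDD.proj, ContinuousLinearMap.sum_apply]
  exact Finset.sum_eq_zero fun j hj =>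
    F.P_tail_eq_zero (lt_of_lt_of_le (Finset.mem_range.mp hj) hnm) hx

end AuxLemmas
section AuxLemmas2
variable {Z : Type*} [NormedAddCommGroup Z] [NormedSpace ℝ Z]

lemma FDD.proj_apply (F : FDD Z) (s : Finset ℕ) (x : Z) :
    F.proj s x = ∑ i ∈ s, F.P i x := by
  rw [FDD.proj, ContinuousLinearMap.sum_apply]

lemma FDD.tendsto_zero_of_tail (F : FDD Z) (hFsh : F.Shrinking)
    (t : ℕ → Z) (M : ℝ) (hbd : ∀ j, ‖t j‖ ≤ M) (ht : ∀ j, t j ∈ F.tail (j + 1))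
    (φ : Z →L[ℝ] ℝ) : Tendsto (fun j => φ (t j)) atTop (𝓝 0) := by
  have hM : 0 ≤ M := le_trans (norm_nonneg _) (hbd 0)
  apply squeeze_zero_norm (a := fun j => ‖φ - φ.comp (F.proj (Finset.range (j + 1)))‖ * M)
  · intro j
    have h0 : F.proj (Finset.range (j + 1)) (t j) = 0 :=
      F.proj_range_tail_eq_zero le_rfl (ht j)
    have he : φ (t j) = (φ - φ.comp (F.proj (Finset.range (j + 1)))) (t j) := by
      simp [h0]
    rw [he]
    calc ‖(φ - φ.comp (F.proj (Finset.range (j + 1)))) (t j)‖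
        ≤ ‖φ - φ.comp (F.proj (Finset.range (j + 1)))‖ * ‖t j‖ :=
          ContinuousLinearMap.le_opNorm _ _
      _ ≤ ‖φ - φ.comp (F.proj (Finset.range (j + 1)))‖ * M := by
          exact mul_le_mul_of_nonneg_left (hbd j) (norm_nonneg _)
  · have h1 := ((hFsh φ).comp (tendsto_add_atTop_nat 1)).mul_const M
    simpa using h1

lemma mazur_small_convex (t : ℕ → Z)
    (ht : ∀ φ : Z →L[ℝ] ℝ, Tendsto (fun j => φ (t j)) atTop (𝓝 0))
    (i : ℕ) {ε : ℝ} (hε : 0 < ε) :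
    ∃ c ∈ convexHull ℝ {w : Z | ∃ j, i ≤ j ∧ w = t j}, ‖c‖ < ε := by
  by_contra hcon
  push_neg at hcon
  have h0 : (0 : Z) ∉ closure (convexHull ℝ {w : Z | ∃ j, i ≤ j ∧ w = t j}) := by
    intro h0
    rw [Metric.mem_closure_iff] at h0
    obtain ⟨c, hc, hd⟩ := h0 ε hε
    rw [dist_comm, dist_zero_right] at hd
    exact absurd hd (not_lt.mpr (hcon c hc))
  obtain ⟨f, u, hfu, hball⟩ := geometric_hahn_banach_point_closed
    ((convex_convexHull ℝ _).closure) isClosed_closure h0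
  have hu0 : 0 < u := by simpa using hfu
  have hev : ∀ᶠ j in atTop, f (t j) < u := Tendsto.eventually_lt_const hu0 (ht f)
  obtain ⟨j, hj1, hj2⟩ := (hev.and (eventually_ge_atTop i)).exists
  have hmem : t j ∈ closure (convexHull ℝ {w : Z | ∃ j', i ≤ j' ∧ w = t j'}) :=
    subset_closure (subset_convexHull ℝ _ ⟨j, hj2, rfl⟩)
  exact absurd (hball _ hmem) (not_lt.mpr hj1.le)

lemma abs_sub_le_of_convexHull (φ : Z →L[ℝ] ℝ) (l ε : ℝ) (s : Set Z)
    (h : ∀ x ∈ s, |φ x - l| ≤ ε) : ∀ u ∈ convexHull ℝ s, |φ u - l| ≤ ε := by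
  have hconv : Convex ℝ {x : Z | |φ x - l| ≤ ε} := by
    intro x hx y hy a b ha hb hab
    simp only [Set.mem_setOf_eq] at hx hy ⊢
    have hφ : φ (a • x + b • y) = a * φ x + b * φ y := by
      simp [map_add, map_smul, smul_eq_mul]
    have h2 : a * φ x + b * φ y - l = a * (φ x - l) + b * (φ y - l) := by
      linear_combination l * hab
    rw [hφ, h2]
    calc |a * (φ x - l) + b * (φ y - l)| ≤ |a * (φ x - l)| + |b * (φ y - l)| := abs_add_le _ _
      _ = a * |φ x - l| + b * |φ y - l| := by
          rw [abs_mul, abs_mul, abs_of_nonneg ha, abs_of_nonneg hb]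
      _ ≤ a * ε + b * ε := by
          exact add_le_add (mul_le_mul_of_nonneg_left (hx) ha)
            (mul_le_mul_of_nonneg_left (hy) hb)
      _ = ε := by rw [← add_mul, hab, one_mul]
  exact fun u hu => convexHull_min h hconv hu

end AuxLemmas2
section AuxLemmas3
variable {Z : Type*} [NormedAddCommGroup Z] [NormedSpace ℝ Z]

set_option synthInstance.maxHeartbeats 1000000 in
set_option maxHeartbeats 1000000 in
lemma FDD.exists_dense_dual_seq (F : FDD Z) (hFsh : F.Shrinking) :
    ∃ φs : ℕ → (Z →L[ℝ] ℝ), ∀ ψ : Z →L[ℝ] ℝ, ∀ ε > 0, ∃ k, ‖ψ - φs k‖ < ε := by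
  classical
  haveI := F.finDim
  set G : ℕ → Submodule ℝ Z := fun n => (Finset.range n).sup F.E with hG
  haveI : ∀ n, FiniteDimensional ℝ (G n) := fun n =>
    Submodule.finiteDimensional_finset_sup _ _
  have hPmem : ∀ n x, F.proj (Finset.range n) x ∈ G n := by
    intro n x
    rw [F.proj_apply]
    exact Submodule.sum_mem _ fun i hi => Finset.le_sup (f := F.E) hi (F.mem_E i x)
  set Pc : ∀ n, Z →L[ℝ] (G n) :=
    fun n => (F.proj (Finset.range n)).codRestrict (G n) (hPmem n) with hPc
  have hsep : ∀ n, ∃ s : Set ((G n) →L[ℝ] ℝ), s.Countable ∧ Dense s := fun n =>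
    TopologicalSpace.exists_countable_dense _
  choose S hSc hSd using hsep
  set D : Set (Z →L[ℝ] ℝ) :=
    ⋃ n, (fun g : (G n) →L[ℝ] ℝ => g.comp (Pc n)) '' (S n) with hD
  have hDc : D.Countable := Set.countable_iUnion fun n => (hSc n).image _
  have hDne : D.Nonempty := by
    obtain ⟨g0, hg0⟩ := (hSd 0).nonempty
    exact ⟨g0.comp (Pc 0), Set.mem_iUnion.mpr ⟨0, Set.mem_image_of_mem _ hg0⟩⟩
  have hDdense : ∀ ψ : Z →L[ℝ] ℝ, ∀ ε > 0, ∃ χ ∈ D, ‖ψ - χ‖ < ε := by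
    intro ψ ε hε
    obtain ⟨n, hn⟩ := (Tendsto.eventually_lt_const (half_pos hε) (hFsh ψ)).exists
    set g : (G n) →L[ℝ] ℝ := ψ.comp (G n).subtypeL with hg
    have hfact : ψ.comp (F.proj (Finset.range n)) = g.comp (Pc n) := by
      ext x; rfl
    set r : ℝ := ε / (2 * (‖Pc n‖ + 1)) with hr
    have hr0 : 0 < r := by
      apply div_pos hε
      positivity
    obtain ⟨g', hg'ball⟩ := (Metric.dense_iff.mp (hSd n) g r hr0)
    obtain ⟨hg'mem1, hg'mem2⟩ := hg'ball
    rw [Metric.mem_ball, dist_comm] at hg'mem1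
    refine ⟨g'.comp (Pc n), Set.mem_iUnion.mpr ⟨n, Set.mem_image_of_mem _ hg'mem2⟩, ?_⟩
    have h1 : ‖ψ - g'.comp (Pc n)‖ ≤ ‖ψ - ψ.comp (F.proj (Finset.range n))‖
        + ‖g.comp (Pc n) - g'.comp (Pc n)‖ := by
      calc ‖ψ - g'.comp (Pc n)‖
          = ‖(ψ - ψ.comp (F.proj (Finset.range n)))
              + (g.comp (Pc n) - g'.comp (Pc n))‖ := by rw [hfact]; abel_nf
        _ ≤ _ := norm_add_le _ _
    have h2 : ‖g.comp (Pc n) - g'.comp (Pc n)‖ ≤ ‖g - g'‖ * ‖Pc n‖ := by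
      rw [← ContinuousLinearMap.sub_comp]
      exact ContinuousLinearMap.opNorm_comp_le _ _
    have h3 : ‖g - g'‖ * ‖Pc n‖ < ε / 2 := by
      have hgg' : ‖g - g'‖ < r := by
        have := hg'mem1
        rwa [@dist_eq_norm ((G n) →L[ℝ] ℝ)
          ContinuousLinearMap.toSeminormedAddCommGroup] at this
      have hPn : (0:ℝ) ≤ ‖Pc n‖ := ContinuousLinearMap.opNorm_nonneg _
      have : ‖g - g'‖ * ‖Pc n‖ ≤ r * ‖Pc n‖ :=
        mul_le_mul_of_nonneg_right hgg'.le hPn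
      have h4 : r * ‖Pc n‖ < ε / 2 := by
        rw [hr]
        rw [div_mul_eq_mul_div, div_lt_iff₀ (by positivity)]
        nlinarith [hPn, hε]
      linarith
    calc ‖ψ - g'.comp (Pc n)‖ ≤ _ := h1
      _ < ε / 2 + ε / 2 := by
          have := lt_of_le_of_lt h2 h3
          exact add_lt_add hn this
      _ = ε := by ring
  obtain ⟨φs, hφs⟩ := hDc.exists_eq_range hDne
  refine ⟨φs, fun ψ ε hε => ?_⟩
  obtain ⟨χ, hχD, hχ⟩ := hDdense ψ ε hε
  rw [hφs] at hχD
  obtain ⟨k, rfl⟩ := hχD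
  exact ⟨k, hχ⟩

end AuxLemmas3
/-- The preliminary observation in the proof of Proposition 2.5: a sequence in the unit
sphere of a closed subspace `X` which is asymptotically close to the tails `Z_i` of a
shrinking FDD has a subsequence which is a small perturbation of a weakly null sequence
in the unit sphere of `X`. -/
theorem near_tail_perturbation_weakly_null
    {Z : Type*} [NormedAddCommGroup Z] [NormedSpace ℝ Z] [CompleteSpace Z]
    (F : FDD Z) (hFsh : F.Shrinking) (C : ℝ) (hC : F.IsProjConst C)
    (X : Submodule ℝ Z) (hXcl : IsClosed (X : Set Z))
    (η : ℝ) (hη : 0 < η) (hηC : (1 + C) * η < 1)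
    (z : ℕ → Z) (hzX : ∀ i, z i ∈ X) (hz1 : ∀ i, ‖z i‖ = 1)
    (hzd : ∀ i, Metric.infDist (z i) (F.tail (i+1)) < η) :
    ∃ σ : ℕ → ℕ, StrictMono σ ∧ ∃ y : ℕ → Z,
      (∀ i, y i ∈ X) ∧ (∀ i, ‖y i‖ = 1) ∧ WeaklyNullSeq y ∧
      ∀ i, ‖z (σ i) - y i‖ < 2 * (1 + C) * η := by
  classical
  -- `C ≥ 1`
  have hC1 : 1 ≤ C := by
    have hub : ∀ n : ℕ, ‖F.proj (Finset.Icc 0 n) (z 0)‖ ≤ C := fun n =>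
      hC.1 ⟨0, n, z 0, le_of_eq (hz1 0), rfl⟩
    have hIcc : ∀ n : ℕ, Finset.Icc 0 n = Finset.range (n + 1) := fun n => by
      ext k; simp [Nat.lt_succ_iff]
    have hlim : Tendsto (fun n => ‖F.proj (Finset.range (n + 1)) (z 0)‖) atTop (𝓝 1) := by
      have h1 : Tendsto (fun n => ∑ i ∈ Finset.range n, F.P i (z 0)) atTop (𝓝 (z 0)) :=
        F.sum_eq (z 0)
      have h2 := (h1.norm).comp (tendsto_add_atTop_nat 1)
      rw [hz1 0] at h2
      refine h2.congr fun n => ?_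
      simp [F.proj_apply, Function.comp]
    refine le_of_tendsto hlim (Filter.Eventually.of_forall fun n => ?_)
    rw [← hIcc n]; exact hub n
  have hη2 : η < 1 / 2 := by nlinarith
  -- choose `t i` in the tails close to `z i`
  have htail_ne : ∀ m : ℕ, (F.tail m).Nonempty := fun m =>
    ⟨0, subset_closure (Submodule.zero_mem _)⟩
  have hch : ∀ i, ∃ w ∈ F.tail (i + 1), dist (z i) w < η := fun i =>
    (Metric.infDist_lt_iff (htail_ne (i + 1))).mp (hzd i)
  choose t htmem htd using hch
  have htz : ∀ i, ‖z i - t i‖ ≤ η := fun i => le_of_lt (by rw [← dist_eq_norm]; exact htd i)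
  have htbd : ∀ j, ‖t j‖ ≤ 2 := by
    intro j
    have h1 : ‖t j‖ ≤ ‖z j‖ + ‖t j - z j‖ := norm_le_insert' (t j) (z j)
    rw [hz1 j, ← norm_neg (t j - z j)] at h1
    have h2 : -(t j - z j) = z j - t j := by abel
    rw [h2] at h1
    linarith [htz j]
  -- `t` is weakly null
  have htwn : ∀ φ : Z →L[ℝ] ℝ, Tendsto (fun j => φ (t j)) atTop (𝓝 0) :=
    F.tendsto_zero_of_tail hFsh t 2 htbd htmem
  -- dense sequence in the dual
  obtain ⟨φs, hφs⟩ := F.exists_dense_dual_seq hFsh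
  -- extract a subsequence along which all `φs k (z ·)` converge
  have hGK : ∀ i, (fun k => φs k (z i)) ∈ Set.pi Set.univ
      (fun k => Set.Icc (-‖φs k‖) ‖φs k‖) := by
    intro i k _
    have h1 := (φs k).le_opNorm (z i)
    rw [hz1 i, mul_one] at h1
    have h2 : |φs k (z i)| ≤ ‖φs k‖ := by rw [← Real.norm_eq_abs]; exact h1
    exact Set.mem_Icc.mpr (abs_le.mp h2)
  obtain ⟨g, -, σ, hσ, hg⟩ := (isCompact_univ_pi fun k => isCompact_Icc).tendsto_subseq hGK
  have hgk : ∀ k, Tendsto (fun i => φs k (z (σ i))) atTop (𝓝 (g k)) := fun k =>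
    (tendsto_pi_nhds.mp hg) k
  -- limits exist along the subsequence for all functionals
  have hLex : ∀ φ : Z →L[ℝ] ℝ, ∃ l : ℝ, Tendsto (fun i => φ (z (σ i))) atTop (𝓝 l) := by
    intro φ
    apply cauchySeq_tendsto_of_complete
    rw [Metric.cauchySeq_iff]
    intro ε hε
    obtain ⟨k, hk⟩ := hφs φ (ε / 3) (by linarith)
    have hck : CauchySeq (fun i => φs k (z (σ i))) := (hgk k).cauchySeq
    rw [Metric.cauchySeq_iff] at hck
    obtain ⟨N, hN⟩ := hck (ε / 3) (by linarith)
    refine ⟨N, fun m hm n hn => ?_⟩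
    have hb : ∀ j : ℕ, |φ (z (σ j)) - φs k (z (σ j))| ≤ ε / 3 := by
      intro j
      have h1 := (φ - φs k).le_opNorm (z (σ j))
      rw [hz1 (σ j), mul_one] at h1
      simp only [ContinuousLinearMap.sub_apply] at h1
      rw [← Real.norm_eq_abs]
      exact h1.trans hk.le
    have h2 := hN m hm n hn
    rw [Real.dist_eq] at h2 ⊢
    have h3 := abs_sub_le (φ (z (σ m))) (φs k (z (σ m))) (φ (z (σ n)))
    have h4 := abs_sub_le (φs k (z (σ m))) (φs k (z (σ n))) (φ (z (σ n)))
    have h5 := hb m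
    have h6 := hb n
    rw [abs_sub_comm (φs k (z (σ n))) (φ (z (σ n)))] at h4
    linarith
  choose L hL using hLex
  -- small-norm convex blocks of the subsequence
  have hu_ex : ∀ i : ℕ, ∃ u ∈ convexHull ℝ {w : Z | ∃ j, i ≤ j ∧ w = z (σ j)},
      ‖u‖ < 3 / 2 * η := by
    intro i
    obtain ⟨c, hc, hcn⟩ := mazur_small_convex (fun j => t (σ j))
      (fun φ => (htwn φ).comp hσ.tendsto_atTop) i (half_pos hη)
    rw [convexHull_eq] at hc
    obtain ⟨ι, A, w, p, hw0, hw1, hps, hcm⟩ := hc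
    have hjex : ∀ a : ι, ∃ m : ℕ, a ∈ A → (i ≤ m ∧ p a = t (σ m)) := by
      intro a
      by_cases ha : a ∈ A
      · obtain ⟨m, hm1, hm2⟩ := hps a ha
        exact ⟨m, fun _ => ⟨hm1, hm2⟩⟩
      · exact ⟨0, fun h => absurd h ha⟩
    choose jj hjj1 using hjex
    refine ⟨∑ a ∈ A, w a • z (σ (jj a)), ?_, ?_⟩
    · have hmem := A.centerMass_mem_convexHull (w := w)
        (s := {w : Z | ∃ j, i ≤ j ∧ w = z (σ j)}) hw0 (by rw [hw1]; norm_num)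
        (z := fun a => z (σ (jj a))) (fun a ha => ⟨jj a, (hjj1 a ha).1, rfl⟩)
      rwa [A.centerMass_eq_of_sum_1 _ hw1] at hmem
    · have hceq : c = ∑ a ∈ A, w a • t (σ (jj a)) := by
        rw [← hcm, A.centerMass_eq_of_sum_1 _ hw1]
        exact Finset.sum_congr rfl fun a ha => by rw [(hjj1 a ha).2]
      have hnd : ‖(∑ a ∈ A, w a • z (σ (jj a))) - c‖ ≤ η := by
        have hdiff : (∑ a ∈ A, w a • z (σ (jj a))) - c
            = ∑ a ∈ A, w a • (z (σ (jj a)) - t (σ (jj a))) := by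
          rw [hceq, ← Finset.sum_sub_distrib]
          exact Finset.sum_congr rfl fun a ha => (smul_sub _ _ _).symm
        rw [hdiff]
        calc ‖∑ a ∈ A, w a • (z (σ (jj a)) - t (σ (jj a)))‖
            ≤ ∑ a ∈ A, ‖w a • (z (σ (jj a)) - t (σ (jj a)))‖ := norm_sum_le _ _
          _ ≤ ∑ a ∈ A, w a * η := by
              refine Finset.sum_le_sum fun a ha => ?_
              rw [norm_smul, Real.norm_eq_abs, abs_of_nonneg (hw0 a ha)]
              exact mul_le_mul_of_nonneg_left (htz _) (hw0 a ha)
          _ = η := by rw [← Finset.sum_mul, hw1, one_mul]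
      calc ‖∑ a ∈ A, w a • z (σ (jj a))‖
          = ‖((∑ a ∈ A, w a • z (σ (jj a))) - c) + c‖ := by rw [sub_add_cancel]
        _ ≤ ‖(∑ a ∈ A, w a • z (σ (jj a))) - c‖ + ‖c‖ := norm_add_le _ _
        _ < 3 / 2 * η := by linarith
  choose u hu_mem hu_norm using hu_ex
  have huX : ∀ i, u i ∈ X := by
    intro i
    have hsub : {w : Z | ∃ j, i ≤ j ∧ w = z (σ j)} ⊆ (X : Set Z) := by
      rintro w ⟨j, -, rfl⟩; exact hzX (σ j)
    exact convexHull_min hsub X.convex (hu_mem i)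
  have huL : ∀ φ : Z →L[ℝ] ℝ, Tendsto (fun i => φ (u i)) atTop (𝓝 (L φ)) := by
    intro φ
    rw [Metric.tendsto_atTop]
    intro ε hε
    have htd2 := hL φ
    rw [Metric.tendsto_atTop] at htd2
    obtain ⟨N, hN⟩ := htd2 (ε / 2) (by linarith)
    refine ⟨N, fun i hi => ?_⟩
    have hset : ∀ x ∈ {w : Z | ∃ j, i ≤ j ∧ w = z (σ j)}, |φ x - L φ| ≤ ε / 2 := by
      rintro x ⟨j, hj, rfl⟩
      have h1 := hN j (le_trans hi hj)
      rw [Real.dist_eq] at h1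
      exact h1.le
    have h2 := abs_sub_le_of_convexHull φ (L φ) (ε / 2) _ hset (u i) (hu_mem i)
    rw [Real.dist_eq]
    linarith
  -- the weakly null perturbation
  set v : ℕ → Z := fun i => z (σ i) - u i with hv
  have hvX : ∀ i, v i ∈ X := fun i => X.sub_mem (hzX (σ i)) (huX i)
  have hvlb : ∀ i, 1 / 4 ≤ ‖v i‖ := by
    intro i
    have h1 : ‖z (σ i)‖ - ‖u i‖ ≤ ‖v i‖ := norm_sub_norm_le _ _
    rw [hz1 (σ i)] at h1
    have h2 := hu_norm i
    linarith
  have hvpos : ∀ i, (0:ℝ) < ‖v i‖ := fun i => lt_of_lt_of_le (by norm_num) (hvlb i)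
  set y : ℕ → Z := fun i => ‖v i‖⁻¹ • v i with hy
  have hy1 : ∀ i, ‖y i‖ = 1 := by
    intro i
    rw [hy]
    simp only [norm_smul, norm_inv, norm_norm]
    exact inv_mul_cancel₀ (hvpos i).ne'
  refine ⟨σ, hσ, y, fun i => X.smul_mem _ (hvX i), hy1, ?_, ?_⟩
  · -- weakly null
    intro φ
    have hv0 : Tendsto (fun i => φ (v i)) atTop (𝓝 0) := by
      have he : (fun i => φ (v i)) = fun i => φ (z (σ i)) - φ (u i) := by
        funext i; rw [hv]; simp [map_sub]
      rw [he]
      have h1 := (hL φ).sub (huL φ)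
      simpa using h1
    apply squeeze_zero_norm (a := fun i => 4 * ‖φ (v i)‖)
    · intro i
      have he : φ (y i) = ‖v i‖⁻¹ * φ (v i) := by
        rw [hy]; simp [map_smul, smul_eq_mul]
      rw [he, norm_mul, norm_inv, norm_norm]
      have h1 : ‖v i‖⁻¹ ≤ 4 := by
        rw [inv_le_comm₀ (hvpos i) (by norm_num)]
        calc (4:ℝ)⁻¹ = 1 / 4 := by norm_num
          _ ≤ ‖v i‖ := hvlb i
      exact mul_le_mul_of_nonneg_right h1 (norm_nonneg _)
    · have h1 := (hv0.norm).const_mul (4:ℝ)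
      simpa using h1
  · -- norm estimate
    intro i
    have h2 : |‖v i‖ - 1| ≤ ‖u i‖ := by
      have h3 : |‖v i‖ - ‖z (σ i)‖| ≤ ‖v i - z (σ i)‖ := abs_norm_sub_norm_le _ _
      rw [hz1 (σ i)] at h3
      have he : v i - z (σ i) = -(u i) := sub_sub_cancel_left _ _
      rw [he, norm_neg] at h3
      exact h3
    have h1 : ‖z (σ i) - y i‖ ≤ ‖u i‖ + |‖v i‖ - 1| := by
      have hsplit : z (σ i) - y i = (z (σ i) - v i) + (v i - y i) := by abel
      rw [hsplit]
      refine (norm_add_le _ _).trans ?_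
      have e1 : z (σ i) - v i = u i := sub_sub_cancel _ _
      have e2 : ‖v i - y i‖ = |‖v i‖ - 1| := by
        rw [hy]
        have e3 : v i - ‖v i‖⁻¹ • v i = (1 - ‖v i‖⁻¹) • v i := by
          rw [sub_smul, one_smul]
        rw [e3, norm_smul, Real.norm_eq_abs]
        calc |1 - ‖v i‖⁻¹| * ‖v i‖ = |(1 - ‖v i‖⁻¹) * ‖v i‖| := by
              rw [abs_mul, abs_of_nonneg (norm_nonneg _)]
          _ = |‖v i‖ - 1| := by
              rw [sub_mul, one_mul, inv_mul_cancel₀ (hvpos i).ne']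
      rw [e1, e2]
    have h3 := hu_norm i
    calc ‖z (σ i) - y i‖ ≤ ‖u i‖ + |‖v i‖ - 1| := h1
      _ ≤ 2 * ‖u i‖ := by linarith
      _ < 3 * η := by linarith
      _ < 2 * (1 + C) * η := by nlinarith
end
end

section
/- Let Z be a Banach space with a shrinking, bimonotone FDD (F_i), let Q : Z -> X be a quotient map, and assume X carries the quotient norm ||x|| = inf{||y|| : Qy = x}, so that Q* : X* -> Z* is an isometric embedding. If (x_i) is a w*-null sequence in the unit sphere S_{X*}, then there exist a subsequence (x'_i) of (x_i) and a weakly null sequence (y_i) in the unit sphere S_X such that x'_i(y_i) > 3/4 for all i. -/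
open Filter Topology Set

noncomputable section

set_option maxHeartbeats 1000000
section AuxLemmas
variable {Z : Type*} [NormedAddCommGroup Z] [NormedSpace ℝ Z]
namespace FDD

lemma proj_apply_s12 (F : FDD Z) (s : Finset ℕ) (z : Z) :
    F.proj s z = ∑ i ∈ s, F.P i z := by
  simp [FDD.proj]

lemma P_P_ne (F : FDD Z) {s t : ℕ} (h : t ≠ s) (z : Z) : F.P t (F.P s z) = 0 := by
  have hu := F.unique (F.P s z) (fun i => if i = s then F.P s z else 0)
    (fun i => by by_cases hi : i = s <;> simp [hi, F.mem_E])
    ?_ t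
  · simpa [h] using hu.symm
  · apply Tendsto.congr' (f₁ := fun _ => F.P s z) _ tendsto_const_nhds
    filter_upwards [eventually_ge_atTop (s+1)] with n hn
    rw [Finset.sum_ite_eq' (Finset.range n) s]
    simp [Nat.lt_of_succ_le hn]

lemma comp_P_tendsto (F : FDD Z) (k : ℕ) (φ : ℕ → Z →L[ℝ] ℝ)
    (h : ∀ z, Tendsto (fun j => φ j z) atTop (𝓝 (0:ℝ))) :
    Tendsto (fun j => ‖(φ j).comp (F.P k)‖) atTop (𝓝 0) := by
  haveI := F.finDim k
  set E := F.E k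
  let b : Module.Basis (Fin (Module.finrank ℝ E)) ℝ E := Module.finBasis ℝ E
  let pk : Z →L[ℝ] E := (F.P k).codRestrict E (F.mem_E k)
  let c : Fin (Module.finrank ℝ E) → (E →L[ℝ] ℝ) :=
    fun t => LinearMap.toContinuousLinearMap (b.coord t)
  apply squeeze_zero (fun j => norm_nonneg _)
    (g := fun j => ∑ t, |φ j (b t)| * ‖(c t).comp pk‖)
  · intro j
    apply ContinuousLinearMap.opNorm_le_bound _
      (Finset.sum_nonneg fun t _ => mul_nonneg (abs_nonneg _) (norm_nonneg _))
    intro z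
    have hrepr : (F.P k) z = ∑ t, (b.repr (pk z) t) • (b t : Z) := by
      have h1 : ((pk z : E) : Z) = F.P k z := rfl
      rw [← h1]
      conv_lhs => rw [← b.sum_repr (pk z)]
      push_cast
      rfl
    calc ‖((φ j).comp (F.P k)) z‖ = ‖φ j (∑ t, (b.repr (pk z) t) • (b t : Z))‖ := by
          rw [ContinuousLinearMap.comp_apply, hrepr]
      _ = ‖∑ t, (b.repr (pk z) t) * φ j (b t)‖ := by
          rw [map_sum]; simp [mul_comm]
      _ ≤ ∑ t, ‖(b.repr (pk z) t) * φ j (b t)‖ := norm_sum_le _ _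
      _ ≤ ∑ t, |φ j (b t)| * ‖(c t).comp pk‖ * ‖z‖ := by
          apply Finset.sum_le_sum
          intro t _
          rw [norm_mul, mul_comm]
          have : ‖b.repr (pk z) t‖ ≤ ‖(c t).comp pk‖ * ‖z‖ := by
            have := ((c t).comp pk).le_opNorm z
            simpa [c, LinearMap.toContinuousLinearMap] using this
          calc |φ j (b t)| * ‖b.repr (pk z) t‖
              ≤ |φ j (b t)| * (‖(c t).comp pk‖ * ‖z‖) :=
                mul_le_mul_of_nonneg_left this (abs_nonneg _)
            _ = _ := by ring
      _ = (∑ t, |φ j (b t)| * ‖(c t).comp pk‖) * ‖z‖ := by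
          rw [Finset.sum_mul]
  · have : Tendsto (fun j => ∑ t, |φ j (b t)| * ‖(c t).comp pk‖) atTop
        (𝓝 (∑ t : Fin (Module.finrank ℝ E), (|(0:ℝ)| * ‖(c t).comp pk‖))) := by
      apply tendsto_finset_sum
      intro t _
      exact (((h (b t)).abs).mul_const _)
    simpa using this

lemma comp_proj_tendsto (F : FDD Z) (s : Finset ℕ) (φ : ℕ → Z →L[ℝ] ℝ)
    (h : ∀ z, Tendsto (fun j => φ j z) atTop (𝓝 (0:ℝ))) :
    Tendsto (fun j => ‖(φ j).comp (F.proj s)‖) atTop (𝓝 0) := by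
  apply squeeze_zero (fun j => norm_nonneg _)
    (g := fun j => ∑ i ∈ s, ‖(φ j).comp (F.P i)‖)
  · intro j
    apply ContinuousLinearMap.opNorm_le_bound _
      (Finset.sum_nonneg fun t _ => norm_nonneg _)
    intro z
    calc ‖((φ j).comp (F.proj s)) z‖ = ‖∑ i ∈ s, φ j (F.P i z)‖ := by
          rw [ContinuousLinearMap.comp_apply, F.proj_apply_s12, map_sum]
      _ ≤ ∑ i ∈ s, ‖φ j (F.P i z)‖ := norm_sum_le _ _
      _ ≤ ∑ i ∈ s, ‖(φ j).comp (F.P i)‖ * ‖z‖ :=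
          Finset.sum_le_sum fun i _ => ((φ j).comp (F.P i)).le_opNorm z
      _ = (∑ i ∈ s, ‖(φ j).comp (F.P i)‖) * ‖z‖ := by rw [Finset.sum_mul]
  · have := tendsto_finset_sum s (fun i _ => F.comp_P_tendsto i φ h)
    simpa using this


end FDD
end AuxLemmas

set_option maxHeartbeats 1000000 in
/-- The step in the proof of Lemma 2.7: given a quotient map `Q` from a space with a
shrinking bimonotone FDD onto `X` (with the quotient norm), every `w^*`-null sequence in
`S_{X^*}` admits a subsequence which is nearly normed by a weakly null sequence in
`S_X`. -/
theorem wstar_null_normed_by_weakly_null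
    {Z : Type*} [NormedAddCommGroup Z] [NormedSpace ℝ Z] [CompleteSpace Z]
    {X : Type*} [NormedAddCommGroup X] [NormedSpace ℝ X] [CompleteSpace X]
    (F : FDD Z) (hFsh : F.Shrinking) (hbm : F.Bimonotone)
    (Q : Z →L[ℝ] X) (hQ : Function.Surjective Q)
    (hquot : ∀ x : X, ‖x‖ = sInf {r : ℝ | ∃ z : Z, Q z = x ∧ r = ‖z‖})
    (x : ℕ → StrongDual ℝ X) (hx1 : ∀ i, ‖x i‖ = 1)
    (hxw : ∀ u : X, Tendsto (fun i => x i u) atTop (𝓝 0)) :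
    ∃ σ : ℕ → ℕ, StrictMono σ ∧ ∃ y : ℕ → X,
      (∀ i, ‖y i‖ = 1) ∧ WeaklyNullSeq y ∧ ∀ i, x (σ i) (y i) > 3/4 := by
  classical
  have hQle : ∀ z : Z, ‖Q z‖ ≤ ‖z‖ := by
    intro z
    rw [hquot (Q z)]
    exact csInf_le ⟨0, by rintro r ⟨z', -, rfl⟩; exact norm_nonneg _⟩ ⟨z, rfl, rfl⟩
  set φ : ℕ → Z →L[ℝ] ℝ := fun j => (x j).comp Q with hφdef
  have hφw : ∀ z : Z, Tendsto (fun j => φ j z) atTop (𝓝 0) := fun z => hxw (Q z)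
  -- Step lemma
  have hstep : ∀ m i₀ : ℕ, ∃ q : ℕ × ℕ × Z, i₀ < q.1 ∧ m < q.2.1 ∧ ‖q.2.2‖ ≤ 1 ∧
      (∀ t ≤ m, F.P t q.2.2 = 0) ∧ x q.1 (Q q.2.2) > 4/5 := by
    intro m i₀
    have h1 : ∀ᶠ j in atTop, ‖(φ j).comp (F.proj (Finset.range (m+1)))‖ < 1/20 :=
      (F.comp_proj_tendsto _ φ hφw).eventually_lt_const (by norm_num)
    obtain ⟨j, hj1, hj2⟩ := ((eventually_gt_atTop i₀).and h1).exists
    have hxj : (9/10 : ℝ) < ‖x j‖ := by rw [hx1 j]; norm_num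
    obtain ⟨u₀, hu₀, hu₀v⟩ := (x j).exists_lt_apply_of_lt_opNorm hxj
    obtain ⟨u, hu, huv⟩ : ∃ u : X, ‖u‖ < 1 ∧ (9/10 : ℝ) < x j u := by
      rcases le_or_gt 0 (x j u₀) with hs | hs
      · exact ⟨u₀, hu₀, by rwa [Real.norm_eq_abs, abs_of_nonneg hs] at hu₀v⟩
      · refine ⟨-u₀, by simpa using hu₀, ?_⟩
        rw [map_neg]
        rwa [Real.norm_eq_abs, abs_of_neg hs] at hu₀v
    obtain ⟨z, hzQ, hz⟩ : ∃ z : Z, Q z = u ∧ ‖z‖ < 1 := by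
      have hne : {r : ℝ | ∃ z : Z, Q z = u ∧ r = ‖z‖}.Nonempty := by
        obtain ⟨z, hz⟩ := hQ u
        exact ⟨‖z‖, z, hz, rfl⟩
      have hlt : sInf {r : ℝ | ∃ z : Z, Q z = u ∧ r = ‖z‖} < 1 := by
        rw [← hquot u]; exact hu
      obtain ⟨r, ⟨z, hzq, rfl⟩, hr⟩ := exists_lt_of_csInf_lt hne hlt
      exact ⟨z, hzq, hr⟩
    have h2 : ∀ᶠ N in atTop, ‖φ j - (φ j).comp (F.proj (Finset.range N))‖ < 1/20 :=
      (hFsh (φ j)).eventually_lt_const (by norm_num)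
    obtain ⟨N, hN1, hN2⟩ := ((eventually_ge_atTop (m+2)).and h2).exists
    obtain ⟨n, rfl⟩ : ∃ n, N = n + 1 := ⟨N - 1, (Nat.succ_pred_eq_of_pos (by omega)).symm⟩
    have hmn : m < n := by omega
    refine ⟨⟨j, n, F.proj (Finset.Icc (m+1) n) z⟩, hj1, hmn, ?_, ?_, ?_⟩
    · exact le_trans (hbm (m+1) n z) hz.le
    · intro t ht
      rw [F.proj_apply_s12, map_sum]
      apply Finset.sum_eq_zero
      intro s hs
      exact F.P_P_ne (by have := (Finset.mem_Icc.mp hs).1; omega) z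
    · -- main estimate
      have hU : Finset.range (n+1) = Finset.range (m+1) ∪ Finset.Icc (m+1) n := by
        ext t; simp only [Finset.mem_union, Finset.mem_range, Finset.mem_Icc]; omega
      have hD : Disjoint (Finset.range (m+1)) (Finset.Icc (m+1) n) := by
        rw [Finset.disjoint_left]
        intro t ht h2'
        simp only [Finset.mem_range] at ht
        simp only [Finset.mem_Icc] at h2'
        omega
      have hsplit : F.proj (Finset.range (n+1)) z =
          F.proj (Finset.range (m+1)) z + F.proj (Finset.Icc (m+1) n) z := by
        rw [F.proj_apply_s12, F.proj_apply_s12, F.proj_apply_s12, hU, Finset.sum_union hD]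
      have e1 : |φ j z - φ j (F.proj (Finset.range (n+1)) z)| ≤ 1/20 := by
        have hle := (φ j - (φ j).comp (F.proj (Finset.range (n+1)))).le_opNorm z
        simp only [ContinuousLinearMap.sub_apply, ContinuousLinearMap.comp_apply] at hle
        rw [Real.norm_eq_abs] at hle
        calc |φ j z - φ j (F.proj (Finset.range (n+1)) z)|
            ≤ ‖φ j - (φ j).comp (F.proj (Finset.range (n+1)))‖ * ‖z‖ := hle
          _ ≤ 1/20 := by nlinarith [norm_nonneg z, norm_nonneg (φ j - (φ j).comp (F.proj (Finset.range (n+1))))]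
      have e2 : |φ j (F.proj (Finset.range (m+1)) z)| ≤ 1/20 := by
        have hle := ((φ j).comp (F.proj (Finset.range (m+1)))).le_opNorm z
        simp only [ContinuousLinearMap.comp_apply] at hle
        rw [Real.norm_eq_abs] at hle
        calc |φ j (F.proj (Finset.range (m+1)) z)|
            ≤ ‖(φ j).comp (F.proj (Finset.range (m+1)))‖ * ‖z‖ := hle
          _ ≤ 1/20 := by nlinarith [norm_nonneg z, norm_nonneg ((φ j).comp (F.proj (Finset.range (m+1))))]
      have e0 : (9/10 : ℝ) < φ j z := by
        show (9/10 : ℝ) < x j (Q z)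
        rw [hzQ]; exact huv
      have heq : x j (Q (F.proj (Finset.Icc (m+1) n) z)) =
          φ j (F.proj (Finset.range (n+1)) z) - φ j (F.proj (Finset.range (m+1)) z) := by
        have : φ j (F.proj (Finset.range (n+1)) z) =
            φ j (F.proj (Finset.range (m+1)) z) + φ j (F.proj (Finset.Icc (m+1) n) z) := by
          rw [hsplit, map_add]
        have h3 : φ j (F.proj (Finset.Icc (m+1) n) z) = x j (Q (F.proj (Finset.Icc (m+1) n) z)) := rfl
        linarith
      rw [heq]
      have := abs_le.mp e1
      have := abs_le.mp e2
      linarith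
  -- recursive construction
  choose f hf1 hf2 hf3 hf4 hf5 using hstep
  let g : ℕ → ℕ × ℕ × Z := fun i => Nat.rec (f 0 0) (fun _ prev => f prev.2.1 prev.1) i
  let mc : ℕ → ℕ := fun i => Nat.rec 0 (fun i' _ => (g i').2.1) i
  have hg0 : g 0 = f 0 0 := rfl
  have hgs : ∀ i, g (i+1) = f (g i).2.1 (g i).1 := fun i => rfl
  have hmc0 : mc 0 = 0 := rfl
  have hmcs : ∀ i, mc (i+1) = (g i).2.1 := fun i => rfl
  have hg : ∀ i, mc i < (g i).2.1 ∧ ‖(g i).2.2‖ ≤ 1 ∧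
      (∀ t ≤ mc i, F.P t (g i).2.2 = 0) ∧ x (g i).1 (Q (g i).2.2) > 4/5 := by
    intro i
    cases i with
    | zero => exact ⟨hf2 0 0, hf3 0 0, hf4 0 0, hf5 0 0⟩
    | succ i' =>
        rw [hgs i', hmcs i']
        exact ⟨hf2 _ _, hf3 _ _, hf4 _ _, hf5 _ _⟩
  set σ : ℕ → ℕ := fun i => (g i).1 with hσ
  set w : ℕ → Z := fun i => (g i).2.2 with hw
  have hσm : StrictMono σ := by
    apply strictMono_nat_of_lt_succ
    intro i
    show (g i).1 < (g (i+1)).1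
    rw [hgs i]
    exact hf1 _ _
  have hmcm : StrictMono mc := by
    apply strictMono_nat_of_lt_succ
    intro i
    rw [hmcs i]
    exact (hg i).1
  have hlow : ∀ i, 4/5 < x (σ i) (Q (w i)) := fun i => (hg i).2.2.2
  have hQw1 : ∀ i, ‖Q (w i)‖ ≤ 1 := fun i => le_trans (hQle _) (hg i).2.1
  have hQwpos : ∀ i, 4/5 < ‖Q (w i)‖ := by
    intro i
    have h1 := (x (σ i)).le_opNorm (Q (w i))
    rw [hx1, one_mul, Real.norm_eq_abs] at h1
    exact lt_of_lt_of_le (hlow i) (le_trans (le_abs_self _) h1)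
  have hQwne : ∀ i, ‖Q (w i)‖ ≠ 0 := fun i => ne_of_gt (lt_trans (by norm_num) (hQwpos i))
  refine ⟨σ, hσm, fun i => ‖Q (w i)‖⁻¹ • Q (w i), ?_, ?_, ?_⟩
  · intro i
    rw [norm_smul, norm_inv, norm_norm, inv_mul_cancel₀ (hQwne i)]
  · intro ψ
    set θ : Z →L[ℝ] ℝ := ψ.comp Q with hθ
    have hkey : ∀ i, |θ (w i)| ≤ ‖θ - θ.comp (F.proj (Finset.range (mc i + 1)))‖ := by
      intro i
      have hz0 : θ (F.proj (Finset.range (mc i + 1)) (w i)) = 0 := by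
        rw [F.proj_apply_s12]
        rw [Finset.sum_eq_zero, map_zero]
        intro t ht
        exact (hg i).2.2.1 t (Nat.lt_succ_iff.mp (Finset.mem_range.mp ht))
      have hle := (θ - θ.comp (F.proj (Finset.range (mc i + 1)))).le_opNorm (w i)
      simp only [ContinuousLinearMap.sub_apply, ContinuousLinearMap.comp_apply,
        Real.norm_eq_abs, hz0, sub_zero] at hle
      calc |θ (w i)| ≤ ‖θ - θ.comp (F.proj (Finset.range (mc i + 1)))‖ * ‖w i‖ := hle
        _ ≤ _ := mul_le_of_le_one_right (norm_nonneg _) (hg i).2.1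
    apply squeeze_zero_norm
      (a := fun i => (4/5 : ℝ)⁻¹ * ‖θ - θ.comp (F.proj (Finset.range (mc i + 1)))‖)
    · intro i
      have heq : ψ (‖Q (w i)‖⁻¹ • Q (w i)) = ‖Q (w i)‖⁻¹ * θ (w i) := by
        rw [map_smul]; rfl
      rw [Real.norm_eq_abs, heq, abs_mul, abs_inv, abs_norm]
      have hinv : ‖Q (w i)‖⁻¹ ≤ (4/5 : ℝ)⁻¹ :=
        inv_anti₀ (by norm_num) (hQwpos i).le
      exact mul_le_mul hinv (hkey i) (abs_nonneg _) (by norm_num)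
    · have h0 := hFsh θ
      have hmt : Tendsto (fun i => mc i + 1) atTop atTop :=
        tendsto_atTop_atTop_of_monotone (fun a b hab => by
          have := hmcm.le_iff_le.mpr hab; omega)
          (fun b => ⟨b, by have := hmcm.le_apply (x := b); omega⟩)
      have := (h0.comp hmt).const_mul ((4/5 : ℝ)⁻¹)
      simpa using this
  · intro i
    have heq : x (σ i) (‖Q (w i)‖⁻¹ • Q (w i)) = ‖Q (w i)‖⁻¹ * x (σ i) (Q (w i)) := by
      rw [map_smul]; rfl
    rw [heq]
    have h1 : (1:ℝ) ≤ ‖Q (w i)‖⁻¹ := by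
      rw [le_inv_comm₀]
      · simpa using hQw1 i
      · norm_num
      · exact lt_trans (by norm_num) (hQwpos i)
    calc (3/4 : ℝ) < x (σ i) (Q (w i)) := by linarith [hlow i]
      _ ≤ ‖Q (w i)‖⁻¹ * x (σ i) (Q (w i)) :=
          le_mul_of_one_le_left (by linarith [hlow i]) h1
end
end

section
/- Let X be a Banach space, let (v_i) be a normalized, 1-unconditional, bimonotone basic sequence with biorthogonal functionals (v_i*), and let C >= 1. Suppose (x_k) is a sequence in the unit ball of X*, (y_k) is a sequence in the unit sphere S_X, and n_1 < n_2 < ... are positive integers such that: x_k(y_k) > 3/4 for all k; |x_k(y_l)| < 4^(-max(k,l)) whenever k is not equal to l; and (v_{n_k}) C-dominates (y_k). Then (x_k) 4C-dominates (v*_{n_k}): for all finitely supported scalars (a_k), ||sum a_k v*_{n_k}|| <= 4C ||sum a_k x_k||. -/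
open Filter Topology Set

noncomputable section

private lemma my_geom_le (t : ℕ) : ∑ i ∈ Finset.range t, ((1:ℝ)/4)^i ≤ 4/3 := by
  rw [geom_sum_eq (by norm_num : (1/4:ℝ) ≠ 1)]
  have h : (0:ℝ) ≤ (1/4:ℝ)^t := by positivity
  have h2 : ((1/4:ℝ)^t - 1)/((1/4:ℝ) - 1) = (1 - (1/4:ℝ)^t) * (4/3) := by ring
  rw [h2]; nlinarith

private lemma my_nat31 (k : ℕ) : (3*(k:ℝ)+1) ≤ 4^k := by
  induction k with
  | zero => norm_num
  | succ p ih =>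
    have h1 : (1:ℝ) ≤ 4^p := one_le_pow₀ (by norm_num)
    push_cast
    rw [pow_succ]
    push_cast at ih
    nlinarith

private lemma my_sumId1 (m : ℕ) : ∑ k ∈ Finset.range m, (3*(k:ℝ)+1)/4^k
    = 8/3 - (12*(m:ℝ)+8)/(3*4^m) := by
  induction m with
  | zero => norm_num
  | succ p ih =>
    rw [Finset.sum_range_succ, ih]
    have h : (4:ℝ)^p ≠ 0 := by positivity
    push_cast
    rw [pow_succ]
    field_simp
    ring

private lemma my_sumId2 (m : ℕ) : ∑ k ∈ Finset.range m, (3*(k:ℝ)+1)^2/16^k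
    = 832/375 - ((48/5)*(m:ℝ)^2 + (192/25)*(m:ℝ) + 832/375)/16^m := by
  induction m with
  | zero => norm_num
  | succ p ih =>
    rw [Finset.sum_range_succ, ih]
    have h : (16:ℝ)^p ≠ 0 := by positivity
    push_cast
    rw [pow_succ]
    field_simp
    ring

private lemma my_erase_sum_le (m k : ℕ) :
    ∑ l ∈ (Finset.range m).erase k, ((4:ℝ)^(max l k))⁻¹ ≤ (3*(k:ℝ)+1)/(3*4^k) := by
  have hsub : (Finset.range m).erase k ⊆ Finset.range k ∪ Finset.Ico (k+1) m := by
    intro l hl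
    simp only [Finset.mem_erase, Finset.mem_range] at hl
    simp only [Finset.mem_union, Finset.mem_range, Finset.mem_Ico]
    omega
  have h1 : ∑ l ∈ (Finset.range m).erase k, ((4:ℝ)^(max l k))⁻¹
      ≤ ∑ l ∈ Finset.range k ∪ Finset.Ico (k+1) m, ((4:ℝ)^(max l k))⁻¹ :=
    Finset.sum_le_sum_of_subset_of_nonneg hsub (fun l _ _ => by positivity)
  have hdisj : Disjoint (Finset.range k) (Finset.Ico (k+1) m) := by
    rw [Finset.disjoint_left]
    intro l hl hl'
    simp only [Finset.mem_range] at hl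
    simp only [Finset.mem_Ico] at hl'
    omega
  rw [Finset.sum_union hdisj] at h1
  have h2 : ∑ l ∈ Finset.range k, ((4:ℝ)^(max l k))⁻¹ = (k:ℝ) * ((4:ℝ)^k)⁻¹ := by
    rw [Finset.sum_congr rfl (fun l hl => by
      rw [max_eq_right (Nat.le_of_lt (Finset.mem_range.1 hl))])]
    simp [mul_comm]
  have h3 : ∑ l ∈ Finset.Ico (k+1) m, ((4:ℝ)^(max l k))⁻¹ ≤ (4/3) * ((4:ℝ)^(k+1))⁻¹ := by
    have e1 : ∑ l ∈ Finset.Ico (k+1) m, ((4:ℝ)^(max l k))⁻¹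
        = ∑ i ∈ Finset.range (m - (k+1)), ((4:ℝ)^(k+1))⁻¹ * ((1:ℝ)/4)^i := by
      rw [Finset.sum_Ico_eq_sum_range]
      refine Finset.sum_congr rfl (fun i _ => ?_)
      rw [max_eq_left (by omega), one_div, inv_pow, pow_add, mul_inv]
    rw [e1, ← Finset.mul_sum]
    have hg := my_geom_le (m - (k+1))
    have hp : (0:ℝ) ≤ ((4:ℝ)^(k+1))⁻¹ := by positivity
    calc ((4:ℝ)^(k+1))⁻¹ * ∑ i ∈ Finset.range (m-(k+1)), ((1:ℝ)/4)^i
        ≤ ((4:ℝ)^(k+1))⁻¹ * (4/3) := by nlinarith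
      _ = (4/3) * ((4:ℝ)^(k+1))⁻¹ := by ring
  have h4 : (k:ℝ) * ((4:ℝ)^k)⁻¹ + (4/3) * ((4:ℝ)^(k+1))⁻¹ = (3*(k:ℝ)+1)/(3*4^k) := by
    rw [pow_succ]
    have h5 : (4:ℝ)^k ≠ 0 := by positivity
    field_simp
  rw [h2] at h1
  rw [← h4]
  linarith

set_option maxHeartbeats 2000000 in
/-- The computation at the end of the proof of Lemma 2.7: if `(x k)` in the unit ball of
`X^*` is almost biorthogonal to the normalized sequence `(y k)` and `(v (n k))`
`C`-dominates `(y k)`, then `(x k)` `4C`-dominates `(v^* (n k))`. -/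
theorem almost_biorthogonal_dominates_dual
    {X : Type*} [NormedAddCommGroup X] [NormedSpace ℝ X] [CompleteSpace X]
    {V : Type*} [NormedAddCommGroup V] [NormedSpace ℝ V] [CompleteSpace V]
    {W : Type*} [NormedAddCommGroup W] [NormedSpace ℝ W] [CompleteSpace W]
    (v : ℕ → V) (w : ℕ → W)
    (hvnorm : IsNormalized v) (hvuncond : IsOneUnconditional v)
    (hvbimono : IsBimonotoneSeq v) (hvbasic : IsBasicSeq v)
    (hw : IsBiorthDual v w)
    (C : ℝ) (hC : 1 ≤ C)
    (x : ℕ → StrongDual ℝ X) (hx : ∀ k, ‖x k‖ ≤ 1)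
    (y : ℕ → X) (hy : ∀ k, ‖y k‖ = 1)
    (n : ℕ → ℕ) (hn : StrictMono n)
    (hbig : ∀ k, x k (y k) > 3/4)
    (hsmall : ∀ k l, k ≠ l → |x k (y l)| < ((4:ℝ) ^ (max k l))⁻¹)
    (hdom : DomBy (fun k => v (n k)) y C) :
    DomBy x (fun k => w (n k)) (4*C) := by
  intro a m
  rcases Nat.eq_zero_or_pos m with hm | hm
  · subst hm; simp
  suffices hgoal : ‖∑ k ∈ Finset.range m, a k • w (n k)‖
      ≤ 4 * C * ‖∑ k ∈ Finset.range m, a k • x k‖ by exact hgoal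
  classical
  set f := ∑ k ∈ Finset.range m, a k • x k with hfdef
  set F := ‖f‖ with hFdef
  have hF0 : 0 ≤ F := norm_nonneg _
  have hfap : ∀ z : X, f z = ∑ l ∈ Finset.range m, a l * x l z := by
    intro z
    rw [hfdef]
    simp [ContinuousLinearMap.sum_apply]
  have hfyF : ∀ k, |f (y k)| ≤ F := by
    intro k
    have h := f.le_opNorm (y k)
    rw [hy k, mul_one, Real.norm_eq_abs] at h
    exact h
  have hne : (Finset.range m).Nonempty := Finset.nonempty_range_iff.2 hm.ne'
  set A := (Finset.range m).sup' hne (fun k => |a k|) with hAdef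
  have hA : ∀ k ∈ Finset.range m, |a k| ≤ A := by
    intro k hk
    rw [hAdef]
    exact Finset.le_sup' (fun k => |a k|) hk
  have hA0 : (0:ℝ) ≤ A := le_trans (abs_nonneg (a 0)) (hA 0 (Finset.mem_range.2 hm))
  set c : ℕ → ℝ := fun k => (3*(k:ℝ)+1)/(3*4^k) with hcdef
  have hc0 : ∀ k, 0 ≤ c k := fun k => by simp only [hcdef]; positivity
  have hc3 : ∀ k, c k ≤ 1/3 := by
    intro k
    simp only [hcdef]
    rw [div_le_div_iff₀ (by positivity) (by norm_num)]
    nlinarith [my_nat31 k]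
  -- per-index bound on |a k|
  have key1 : ∀ k ∈ Finset.range m, (3/4)*|a k| ≤ F + A * c k := by
    intro k hk
    have hsplit : a k * x k (y k)
        = f (y k) - ∑ l ∈ (Finset.range m).erase k, a l * x l (y k) := by
      rw [hfap (y k), ← Finset.add_sum_erase _ _ hk]
      ring
    have e1 : |a k * x k (y k)|
        ≤ |f (y k)| + ∑ l ∈ (Finset.range m).erase k, |a l * x l (y k)| := by
      rw [hsplit]
      calc |f (y k) - ∑ l ∈ (Finset.range m).erase k, a l * x l (y k)|
          ≤ |f (y k)| + |∑ l ∈ (Finset.range m).erase k, a l * x l (y k)| :=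
            abs_sub _ _
        _ ≤ |f (y k)| + ∑ l ∈ (Finset.range m).erase k, |a l * x l (y k)| := by
            have := Finset.abs_sum_le_sum_abs
              (fun l => a l * x l (y k)) ((Finset.range m).erase k)
            linarith
    have e2 : ∑ l ∈ (Finset.range m).erase k, |a l * x l (y k)| ≤ A * c k := by
      calc ∑ l ∈ (Finset.range m).erase k, |a l * x l (y k)|
          ≤ ∑ l ∈ (Finset.range m).erase k, A * ((4:ℝ)^(max l k))⁻¹ := by
            apply Finset.sum_le_sum
            intro l hl
            rw [abs_mul]
            have hlk : l ≠ k := (Finset.mem_erase.1 hl).1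
            exact mul_le_mul (hA l (Finset.mem_erase.1 hl).2) (hsmall l k hlk).le
              (abs_nonneg _) hA0
        _ = A * ∑ l ∈ (Finset.range m).erase k, ((4:ℝ)^(max l k))⁻¹ :=
            (Finset.mul_sum _ _ _).symm
        _ ≤ A * c k := by
            have := my_erase_sum_le m k
            simp only [hcdef]
            nlinarith
    have e3 : (3/4)*|a k| ≤ |a k * x k (y k)| := by
      rw [abs_mul]
      have hb := hbig k
      have h34 : (3:ℝ)/4 ≤ |x k (y k)| := le_trans hb.le (le_abs_self _)
      nlinarith [abs_nonneg (a k)]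
    linarith [hfyF k]
  have key1' : ∀ k ∈ Finset.range m, |a k| ≤ (4/3)*F + (4/3)*(A * c k) := by
    intro k hk
    have := key1 k hk
    linarith
  have hAF : A ≤ (12/5)*F := by
    obtain ⟨k0, hk0, hk0A⟩ := Finset.exists_mem_eq_sup' hne (fun k => |a k|)
    have h1 := key1 k0 hk0
    have h2 : A * c k0 ≤ A * (1/3) := mul_le_mul_of_nonneg_left (hc3 k0) hA0
    rw [← hAdef] at hk0A
    rw [← hk0A] at h1
    linarith
  -- sums of c and c²
  have hcsum : ∑ k ∈ Finset.range m, c k ≤ 8/9 := by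
    have h := my_sumId1 m
    have h2 : ∑ k ∈ Finset.range m, c k
        = (1/3) * ∑ k ∈ Finset.range m, (3*(k:ℝ)+1)/4^k := by
      rw [Finset.mul_sum]
      refine Finset.sum_congr rfl (fun k _ => ?_)
      simp only [hcdef]
      have h5 : (4:ℝ)^k ≠ 0 := by positivity
      field_simp
    have hpos : (0:ℝ) ≤ (12*(m:ℝ)+8)/(3*4^m) := by positivity
    rw [h2, h]
    linarith
  have hcsq : ∑ k ∈ Finset.range m, (c k)^2 ≤ 832/3375 := by
    have h := my_sumId2 m
    have h2 : ∑ k ∈ Finset.range m, (c k)^2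
        = (1/9) * ∑ k ∈ Finset.range m, (3*(k:ℝ)+1)^2/16^k := by
      rw [Finset.mul_sum]
      refine Finset.sum_congr rfl (fun k _ => ?_)
      simp only [hcdef]
      have h16 : (16:ℝ)^k = ((4:ℝ)^k)^2 := by
        rw [show (16:ℝ) = 4^2 by norm_num, ← pow_mul, ← pow_mul, Nat.mul_comm]
      have h5 : (4:ℝ)^k ≠ 0 := by positivity
      rw [h16]
      field_simp
      ring
    have hpos : (0:ℝ) ≤ ((48/5)*(m:ℝ)^2 + (192/25)*(m:ℝ) + 832/375)/16^m := by positivity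
    rw [h2, h]
    linarith
  -- reduction to the biorthogonal dual characterization
  set N := n m with hNdef
  have himg : ∀ k, k < m → n k < N := fun k hk => hn hk
  set g : ℕ → ℝ := fun i => ∑ k ∈ (Finset.range m).filter (fun k => n k = i), a k
    with hgdef
  have hmaps : ∀ k ∈ Finset.range m, n k ∈ Finset.range N := fun k hk =>
    Finset.mem_range.2 (himg k (Finset.mem_range.1 hk))
  have hgw : ∑ i ∈ Finset.range N, g i • w i = ∑ k ∈ Finset.range m, a k • w (n k) := by
    rw [← Finset.sum_fiberwise_of_maps_to hmaps (fun k => a k • w (n k))]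
    refine Finset.sum_congr rfl (fun i _ => ?_)
    simp only [hgdef]
    rw [Finset.sum_smul]
    refine Finset.sum_congr rfl (fun k hk => ?_)
    rw [(Finset.mem_filter.1 hk).2]
  rw [← hgw]
  refine (hw g N).2 ?_
  intro r hr
  obtain ⟨b, hb1, rfl⟩ := hr
  have hgb : ∑ i ∈ Finset.range N, g i * b i = ∑ k ∈ Finset.range m, a k * b (n k) := by
    rw [← Finset.sum_fiberwise_of_maps_to hmaps (fun k => a k * b (n k))]
    refine Finset.sum_congr rfl (fun i _ => ?_)
    simp only [hgdef]
    rw [Finset.sum_mul]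
    refine Finset.sum_congr rfl (fun k hk => ?_)
    rw [(Finset.mem_filter.1 hk).2]
  rw [hgb]
  -- coefficients of b are at most one
  have hb_le : ∀ k, k < m → |b (n k)| ≤ 1 := by
    intro k hk
    have h2 := hvbimono b (n k) (n k + 1) N (himg k hk)
    rw [Nat.Ico_succ_singleton, Finset.sum_singleton, norm_smul, hvnorm (n k),
      mul_one, Real.norm_eq_abs] at h2
    exact le_trans h2 hb1
  -- sign functions
  set s : ℕ → ℝ := fun k => if a k * b (n k) < 0 then -1 else 1 with hsdef
  set ε : ℕ → ℝ := fun i => if a (Function.invFun n i) * b i < 0 then -1 else 1 with hεdef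
  have hεn : ∀ k, ε (n k) = s k := by
    intro k
    have hi : Function.invFun n (n k) = k := Function.leftInverse_invFun hn.injective k
    simp only [hεdef, hsdef, hi]
  have hε1 : ∀ i, ε i = 1 ∨ ε i = -1 := by
    intro i
    simp only [hεdef]
    split <;> simp
  have hs1 : ∀ k, s k = 1 ∨ s k = -1 := by
    intro k
    simp only [hsdef]
    split <;> simp
  have hsabs : ∀ k, s k * (a k * b (n k)) = |a k * b (n k)| := by
    intro k
    simp only [hsdef]
    split
    · next h => rw [abs_of_neg h]; ring
    · next h => rw [abs_of_nonneg (not_lt.1 h)]; ring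
  set δ : ℕ → ℝ := fun i => if i ∈ (Finset.range m).image n then (1:ℝ) else -1 with hδdef
  set εδ : ℕ → ℝ := fun i => δ i * ε i with hεδdef
  have hεδ1 : ∀ i, εδ i = 1 ∨ εδ i = -1 := by
    intro i
    simp only [hεδdef, hδdef]
    rcases hε1 i with h | h <;> rw [h] <;> split <;> norm_num
  have hS1 : ‖∑ i ∈ Finset.range N, (ε i * b i) • v i‖ ≤ 1 := by
    rw [hvuncond b ε hε1 N]; exact hb1
  have hS2 : ‖∑ i ∈ Finset.range N, (εδ i * b i) • v i‖ ≤ 1 := by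
    rw [hvuncond b εδ hεδ1 N]; exact hb1
  have himsub : (Finset.range m).image n ⊆ Finset.range N := by
    intro i hi
    obtain ⟨k, hk, rfl⟩ := Finset.mem_image.1 hi
    exact hmaps k hk
  -- norm of the sign-flipped restricted vector
  have hkey : ∑ k ∈ Finset.range m, (s k * b (n k)) • v (n k)
      = (2⁻¹:ℝ) • (∑ i ∈ Finset.range N, (ε i * b i) • v i
          + ∑ i ∈ Finset.range N, (εδ i * b i) • v i) := by
    rw [← Finset.sum_add_distrib, Finset.smul_sum]
    have hpt : ∀ i ∈ Finset.range N,
        (2⁻¹:ℝ) • ((ε i * b i) • v i + (εδ i * b i) • v i)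
        = (((1 + δ i)/2) * (ε i * b i)) • v i := by
      intro i _
      rw [smul_add, smul_smul, smul_smul, ← add_smul]
      congr 1
      simp only [hεδdef]
      ring
    rw [Finset.sum_congr rfl hpt]
    rw [← Finset.sum_subset himsub (fun i _ hni => by
      have hδi : δ i = -1 := by simp only [hδdef]; rw [if_neg hni]
      rw [hδi]
      norm_num)]
    rw [Finset.sum_image (fun p _ q _ hpq => hn.injective hpq)]
    refine Finset.sum_congr rfl (fun k hk => ?_)
    have hδ1' : δ (n k) = 1 := by
      simp only [hδdef]
      rw [if_pos (Finset.mem_image_of_mem n hk)]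
    rw [hδ1', hεn k]
    congr 1
    ring
  have hVle : ‖∑ k ∈ Finset.range m, (s k * b (n k)) • v (n k)‖ ≤ 1 := by
    rw [hkey, norm_smul]
    have h1 := norm_add_le (∑ i ∈ Finset.range N, (ε i * b i) • v i)
      (∑ i ∈ Finset.range N, (εδ i * b i) • v i)
    have e1 : ‖(2⁻¹:ℝ)‖ = 2⁻¹ := by norm_num
    rw [e1]
    linarith
  -- the test vector u
  set q : ℕ → ℝ := fun k => s k * b (n k) with hqdef
  set u := ∑ k ∈ Finset.range m, q k • y k with hudef
  have hudom := hdom q m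
  beta_reduce at hudom
  have hqv : ∑ i ∈ Finset.range m, q i • v (n i)
      = ∑ k ∈ Finset.range m, (s k * b (n k)) • v (n k) := by
    refine Finset.sum_congr rfl (fun k _ => ?_)
    simp only [hqdef]
  rw [hqv] at hudom
  have hC0 : (0:ℝ) ≤ C := le_trans zero_le_one hC
  have hu_norm : ‖u‖ ≤ C := by
    rw [hudef]
    calc ‖∑ k ∈ Finset.range m, q k • y k‖
        ≤ C * ‖∑ k ∈ Finset.range m, (s k * b (n k)) • v (n k)‖ := hudom
      _ ≤ C * 1 := mul_le_mul_of_nonneg_left hVle hC0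
      _ = C := mul_one C
  have hfu : f u ≤ C * F := by
    have h1 : f u ≤ |f u| := le_abs_self _
    have h2 := f.le_opNorm u
    rw [Real.norm_eq_abs, ← hFdef] at h2
    nlinarith [norm_nonneg u]
  -- expansion of f u
  have hxl : ∀ l, x l u = ∑ k ∈ Finset.range m, q k * x l (y k) := by
    intro l
    rw [hudef, map_sum]
    refine Finset.sum_congr rfl (fun k _ => ?_)
    simp
  have hexp : f u = ∑ l ∈ Finset.range m, ∑ k ∈ Finset.range m,
      a l * (q k * x l (y k)) := by
    rw [hfap u]
    refine Finset.sum_congr rfl (fun l _ => ?_)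
    rw [hxl l, Finset.mul_sum]
  set O := ∑ l ∈ Finset.range m, ∑ k ∈ (Finset.range m).erase l,
      a l * (q k * x l (y k)) with hOdef
  have hsplit2 : f u = (∑ l ∈ Finset.range m, |a l * b (n l)| * x l (y l)) + O := by
    rw [hexp, hOdef, ← Finset.sum_add_distrib]
    refine Finset.sum_congr rfl (fun l hl => ?_)
    rw [← Finset.add_sum_erase _ _ hl]
    congr 1
    rw [← hsabs l]
    simp only [hqdef]
    ring
  set S := ∑ l ∈ Finset.range m, |a l * b (n l)| with hSdef
  have hDS : (3/4) * S ≤ ∑ l ∈ Finset.range m, |a l * b (n l)| * x l (y l) := by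
    rw [hSdef, Finset.mul_sum]
    apply Finset.sum_le_sum
    intro l _
    have hb3 := (hbig l).le
    nlinarith [abs_nonneg (a l * b (n l))]
  -- bounding the off-diagonal part
  have hOle : |O| ≤ ∑ l ∈ Finset.range m, |a l| * c l := by
    calc |O| ≤ ∑ l ∈ Finset.range m,
        |∑ k ∈ (Finset.range m).erase l, a l * (q k * x l (y k))| := by
          rw [hOdef]
          exact Finset.abs_sum_le_sum_abs _ _
      _ ≤ ∑ l ∈ Finset.range m, |a l| * c l := by
          apply Finset.sum_le_sum
          intro l hl
          calc |∑ k ∈ (Finset.range m).erase l, a l * (q k * x l (y k))|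
              ≤ ∑ k ∈ (Finset.range m).erase l, |a l * (q k * x l (y k))| :=
                Finset.abs_sum_le_sum_abs _ _
            _ ≤ ∑ k ∈ (Finset.range m).erase l, |a l| * ((4:ℝ)^(max k l))⁻¹ := by
                apply Finset.sum_le_sum
                intro k hk
                have hkl : l ≠ k := ((Finset.mem_erase.1 hk).1).symm
                have hkm : k < m := Finset.mem_range.1 (Finset.mem_erase.1 hk).2
                have hq1 : |q k| ≤ 1 := by
                  simp only [hqdef, abs_mul]
                  rcases hs1 k with h | h <;> rw [h] <;> simp [hb_le k hkm]
                have hx1 : |x l (y k)| ≤ ((4:ℝ)^(max l k))⁻¹ := (hsmall l k hkl).le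
                have hmc : max l k = max k l := max_comm l k
                rw [abs_mul, abs_mul]
                have h6 : |q k| * |x l (y k)| ≤ ((4:ℝ)^(max k l))⁻¹ := by
                  rw [← hmc]
                  have h7 : (0:ℝ) ≤ ((4:ℝ)^(max l k))⁻¹ := by positivity
                  nlinarith [abs_nonneg (q k), abs_nonneg (x l (y k))]
                exact mul_le_mul_of_nonneg_left h6 (abs_nonneg (a l))
            _ = |a l| * ∑ k ∈ (Finset.range m).erase l, ((4:ℝ)^(max k l))⁻¹ :=
                (Finset.mul_sum _ _ _).symm
            _ ≤ |a l| * c l := by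
                have := my_erase_sum_le m l
                simp only [hcdef]
                nlinarith [abs_nonneg (a l)]
  have hsum1 : ∑ l ∈ Finset.range m, |a l| * c l
      ≤ (4/3)*F*(8/9) + ((4/3)*A)*(832/3375) := by
    calc ∑ l ∈ Finset.range m, |a l| * c l
        ≤ ∑ l ∈ Finset.range m, ((4/3)*F + (4/3)*(A * c l)) * c l :=
          Finset.sum_le_sum (fun l hl =>
            mul_le_mul_of_nonneg_right (key1' l hl) (hc0 l))
      _ = (4/3)*F*(∑ l ∈ Finset.range m, c l)
          + ((4/3)*A)*(∑ l ∈ Finset.range m, (c l)^2) := by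
          rw [Finset.sum_congr rfl ((fun l _ => by ring) :
              ∀ l ∈ Finset.range m, ((4/3)*F + (4/3)*(A * c l)) * c l
              = (4/3)*F*(c l) + ((4/3)*A)*((c l)^2))]
          rw [Finset.sum_add_distrib, ← Finset.mul_sum, ← Finset.mul_sum]
      _ ≤ (4/3)*F*(8/9) + ((4/3)*A)*(832/3375) := by
          have h1 : (0:ℝ) ≤ (4/3)*F := by linarith
          have h2 : (0:ℝ) ≤ (4/3)*A := by linarith
          have := mul_le_mul_of_nonneg_left hcsum h1
          have := mul_le_mul_of_nonneg_left hcsq h2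
          linarith
  -- combine everything
  have hcomb : (3/4) * S ≤ C * F + ((4/3)*F*(8/9) + ((4/3)*A)*(832/3375)) := by
    have h0 : -O ≤ |O| := neg_le_abs O
    have h1 : (3/4)*S ≤ f u - O := by
      have := hDS
      linarith [hsplit2.ge, hsplit2.le]
    linarith [hOle, hsum1]
  have hfin : ∑ k ∈ Finset.range m, a k * b (n k) ≤ S := by
    rw [hSdef]
    refine Finset.sum_le_sum (fun k _ => ?_)
    rw [abs_mul]
    calc a k * b (n k) ≤ |a k * b (n k)| := le_abs_self _
      _ = |a k| * |b (n k)| := abs_mul _ _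
  have hCF : F ≤ C * F := le_mul_of_one_le_left hF0 hC
  have h4CF : (4:ℝ)*C*F = 4*(C*F) := by ring
  rw [h4CF]
  linarith [hcomb, hAF, hCF, hfin]
end
end

section
/- Let (v_i) be a normalized, 1-unconditional basic sequence which is D-right dominant for some D >= 1. Then its sequence of biorthogonal functionals (v_i*) is D-left dominant: whenever m_1 < m_2 < ... and n_1 < n_2 < ... are positive integers with m_i <= n_i for all i, the sequence (v*_{m_i}) D-dominates (v*_{n_i}). -/
open Filter Topology Set

noncomputable section

private def extSeq (m : ℕ → ℕ) (N : ℕ) (g : ℕ → ℝ) : ℕ → ℝ :=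
  fun j => if h : ∃ i, i < N ∧ m i = j then g h.choose else 0

private lemma extSeq_apply {m : ℕ → ℕ} (hm : Function.Injective m) {N i : ℕ} (hi : i < N)
    (g : ℕ → ℝ) : extSeq m N g (m i) = g i := by
  have h : ∃ i', i' < N ∧ m i' = m i := ⟨i, hi, rfl⟩
  rw [extSeq, dif_pos h]
  have := h.choose_spec
  rw [hm this.2]

private lemma sum_extSeq {E : Type*} [AddCommMonoid E] {m : ℕ → ℕ} (hm : Function.Injective m)
    {N M : ℕ} (hM : ∀ i < N, m i < M) (g : ℕ → ℝ) (F : ℕ → ℝ → E) (hF : ∀ j, F j 0 = 0) :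
    ∑ j ∈ Finset.range M, F j (extSeq m N g j) = ∑ i ∈ Finset.range N, F (m i) (g i) := by
  classical
  have hsub : Finset.image m (Finset.range N) ⊆ Finset.range M := by
    intro j hj
    obtain ⟨i, hi, rfl⟩ := Finset.mem_image.mp hj
    exact Finset.mem_range.mpr (hM i (Finset.mem_range.mp hi))
  have hz : ∀ j ∈ Finset.range M, j ∉ Finset.image m (Finset.range N) →
      F j (extSeq m N g j) = 0 := by
    intro j _ hjT
    have hne : ¬ ∃ i, i < N ∧ m i = j := by
      rintro ⟨i, hi, rfl⟩
      exact hjT (Finset.mem_image.mpr ⟨i, Finset.mem_range.mpr hi, rfl⟩)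
    rw [extSeq, dif_neg hne, hF]
  rw [← Finset.sum_subset hsub hz, Finset.sum_image (fun i _ j _ h => hm h)]
  apply Finset.sum_congr rfl
  intro i hi
  rw [extSeq_apply hm (Finset.mem_range.mp hi)]

private lemma uncond_subset {V : Type*} [NormedAddCommGroup V] [NormedSpace ℝ V]
    {v : ℕ → V} (hv : IsOneUnconditional v) (b : ℕ → ℝ) (M : ℕ) (T : Finset ℕ)
    (hT : T ⊆ Finset.range M) :
    ‖∑ j ∈ T, b j • v j‖ ≤ ‖∑ j ∈ Finset.range M, b j • v j‖ := by
  classical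
  set ε : ℕ → ℝ := fun j => if j ∈ T then 1 else -1 with hε
  have hεs : ∀ j, ε j = 1 ∨ ε j = -1 := by
    intro j; by_cases h : j ∈ T <;> simp [hε, h]
  have key : ∑ j ∈ Finset.range M, b j • v j + ∑ j ∈ Finset.range M, (ε j * b j) • v j =
      (2:ℝ) • ∑ j ∈ T, b j • v j := by
    rw [← Finset.sum_add_distrib]
    have h1 : ∀ j, b j • v j + (ε j * b j) • v j = ((1 + ε j) * b j) • v j := by
      intro j
      rw [← add_smul]
      ring_nf
    simp only [h1]
    rw [← Finset.sum_subset hT, Finset.smul_sum]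
    · apply Finset.sum_congr rfl
      intro j hj
      have : ε j = 1 := if_pos hj
      rw [smul_smul, this]
      norm_num
    · intro j _ hjT
      have : ε j = -1 := if_neg hjT
      rw [this]
      simp
  have huc := hv b ε hεs M
  have h2 : ‖(2:ℝ) • ∑ j ∈ T, b j • v j‖ = 2 * ‖∑ j ∈ T, b j • v j‖ := by
    rw [norm_smul]; norm_num
  calc ‖∑ j ∈ T, b j • v j‖ = (1/2) * ‖(2:ℝ) • ∑ j ∈ T, b j • v j‖ := by rw [h2]; ring
  _ = (1/2) * ‖∑ j ∈ Finset.range M, b j • v j +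
        ∑ j ∈ Finset.range M, (ε j * b j) • v j‖ := by rw [key]
  _ ≤ (1/2) * (‖∑ j ∈ Finset.range M, b j • v j‖ +
        ‖∑ j ∈ Finset.range M, (ε j * b j) • v j‖) := by
      gcongr; exact norm_add_le _ _
  _ = ‖∑ j ∈ Finset.range M, b j • v j‖ := by rw [huc]; ring

/-- main -/
theorem biorth_dual_left_dominant
    {V : Type*} [NormedAddCommGroup V] [NormedSpace ℝ V] [CompleteSpace V]
    {W : Type*} [NormedAddCommGroup W] [NormedSpace ℝ W] [CompleteSpace W]
    (v : ℕ → V) (w : ℕ → W)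
    (hvnorm : IsNormalized v) (hvuncond : IsOneUnconditional v) (hvbasic : IsBasicSeq v)
    (hw : IsBiorthDual v w)
    (D : ℝ) (hD : 1 ≤ D) (hright : RightDominantC v D) :
    LeftDominantC w D := by
  intro m n hm hn hmn a N
  have hD0 : (0:ℝ) < D := lt_of_lt_of_le one_pos hD
  have hmM : ∀ i < N, m i < m N := fun i hi => hm hi
  have hnM : ∀ i < N, n i < n N := fun i hi => hn hi
  -- rewrite the two vectors as sums over initial segments
  have hWn : ∑ j ∈ Finset.range (n N), extSeq n N a j • w j
      = ∑ i ∈ Finset.range N, a i • w (n i) :=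
    sum_extSeq hn.injective hnM a (fun j c => c • w j) (fun j => zero_smul ℝ (w j))
  have hWm : ∑ j ∈ Finset.range (m N), extSeq m N a j • w j
      = ∑ i ∈ Finset.range N, a i • w (m i) :=
    sum_extSeq hm.injective hmM a (fun j c => c • w j) (fun j => zero_smul ℝ (w j))
  have hlubN := hw (extSeq n N a) (n N)
  have hlubM := hw (extSeq m N a) (m N)
  rw [hWn] at hlubN
  rw [hWm] at hlubM
  -- it suffices to show D * L is an upper bound of the set for the n-side
  apply hlubN.2
  rintro r ⟨b, hb, rfl⟩
  have hr : ∑ j ∈ Finset.range (n N), extSeq n N a j * b j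
      = ∑ i ∈ Finset.range N, a i * b (n i) :=
    sum_extSeq hn.injective hnM a (fun j c => c * b j) (fun j => zero_mul (b j))
  rw [hr]
  -- candidate coefficients on the m-side
  set d : ℕ → ℝ := extSeq m N (fun i => b (n i) / D) with hd
  have hdv : ∑ j ∈ Finset.range (m N), d j • v j
      = ∑ i ∈ Finset.range N, (b (n i) / D) • v (m i) :=
    sum_extSeq hm.injective hmM _ (fun j c => c • v j) (fun j => zero_smul ℝ (v j))
  -- norm estimate for d
  have hnorm1 : ‖∑ i ∈ Finset.range N, b (n i) • v (n i)‖ ≤ 1 := by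
    have hsub : Finset.image n (Finset.range N) ⊆ Finset.range (n N) := by
      intro j hj
      obtain ⟨i, hi, rfl⟩ := Finset.mem_image.mp hj
      exact Finset.mem_range.mpr (hnM i (Finset.mem_range.mp hi))
    have h1 := uncond_subset hvuncond b (n N) _ hsub
    rw [Finset.sum_image (fun i _ j _ h => hn.injective h)] at h1
    exact h1.trans hb
  have hdom := hright m n hm hn hmn (fun i => b (n i)) N
  have hd1 : ‖∑ j ∈ Finset.range (m N), d j • v j‖ ≤ 1 := by
    rw [hdv]
    have heq : ∑ i ∈ Finset.range N, (b (n i) / D) • v (m i)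
        = D⁻¹ • ∑ i ∈ Finset.range N, b (n i) • v (m i) := by
      rw [Finset.smul_sum]
      apply Finset.sum_congr rfl
      intro i _
      rw [smul_smul, div_eq_inv_mul]
    rw [heq, norm_smul]
    have : ‖(D:ℝ)⁻¹‖ = D⁻¹ := by
      rw [Real.norm_eq_abs, abs_of_pos (inv_pos.mpr hD0)]
    rw [this]
    calc D⁻¹ * ‖∑ i ∈ Finset.range N, b (n i) • v (m i)‖
        ≤ D⁻¹ * (D * ‖∑ i ∈ Finset.range N, b (n i) • v (n i)‖) := by
          gcongr
      _ = ‖∑ i ∈ Finset.range N, b (n i) • v (n i)‖ := by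
          field_simp
      _ ≤ 1 := hnorm1
  -- the pairing value on the m-side
  have hpair : ∑ j ∈ Finset.range (m N), extSeq m N a j * d j
      = (∑ i ∈ Finset.range N, a i * b (n i)) / D := by
    have h1 : ∑ j ∈ Finset.range (m N), extSeq m N a j * d j
        = ∑ i ∈ Finset.range N, a i * d (m i) :=
      sum_extSeq hm.injective hmM a (fun j c => c * d j) (fun j => zero_mul (d j))
    rw [h1, Finset.sum_div]
    apply Finset.sum_congr rfl
    intro i hi
    rw [hd, extSeq_apply hm.injective (Finset.mem_range.mp hi), mul_div_assoc]
  have hmem : (∑ i ∈ Finset.range N, a i * b (n i)) / D ∈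
      {r : ℝ | ∃ b : ℕ → ℝ, ‖∑ j ∈ Finset.range (m N), b j • v j‖ ≤ 1 ∧
        r = ∑ j ∈ Finset.range (m N), extSeq m N a j * b j} :=
    ⟨d, hd1, hpair.symm⟩
  have hle := hlubM.1 hmem
  rw [div_le_iff₀ hD0] at hle
  calc ∑ i ∈ Finset.range N, a i * b (n i)
      ≤ ‖∑ i ∈ Finset.range N, a i • w (m i)‖ * D := hle
    _ = D * ‖∑ i ∈ Finset.range N, a i • w (m i)‖ := mul_comm _ _
end
end
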